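/- arXiv:2312.10107 — 5 statements merged into one kernel-verified Lean document; each statement's English description precedes it below -/
import Mathlib

section
/- (Remark after Theorem 2.1) Assume Y ⊥ S | (X, E) and that there is a measurable function g with E = g ∘ S (the environment is perfectly recoverable from the context set S). Then Y ⊥ S | X holds if and only if Y ⊥ E | X holds; that is, under perfect recovery of E from S, the context set S is conditionally dependent on Y given X exactly when the environment E is. -/
open MeasureTheory ProbabilityTheory

lemma aux_sup_eq_generateFrom {Ω : Type*} (m₁ m₂ : MeasurableSpace Ω) :
    m₁ ⊔ m₂ = MeasurableSpace.generateFrom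
      {u | ∃ a, MeasurableSet[m₁] a ∧ ∃ b, MeasurableSet[m₂] b ∧ u = a ∩ b} := by
  refine le_antisymm (sup_le ?_ ?_) (MeasurableSpace.generateFrom_le ?_)
  · exact fun a ha => MeasurableSpace.measurableSet_generateFrom
      ⟨a, ha, Set.univ, MeasurableSet.univ, (Set.inter_univ a).symm⟩
  · exact fun b hb => MeasurableSpace.measurableSet_generateFrom
      ⟨Set.univ, MeasurableSet.univ, b, hb, (Set.univ_inter b).symm⟩
  · rintro u ⟨a, ha, b, hb, rfl⟩
    exact ((le_sup_left : m₁ ≤ m₁ ⊔ m₂) a ha).inter ((le_sup_right : m₂ ≤ m₁ ⊔ m₂) b hb)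

lemma aux_isPiSystem {Ω : Type*} (m₁ m₂ : MeasurableSpace Ω) :
    IsPiSystem {u | ∃ a, MeasurableSet[m₁] a ∧ ∃ b, MeasurableSet[m₂] b ∧ u = a ∩ b} := by
  rintro u ⟨a, ha, b, hb, rfl⟩ v ⟨c, hc, d, hd, rfl⟩ -
  exact ⟨a ∩ c, ha.inter hc, b ∩ d, hb.inter hd, by ext x; simp; tauto⟩

lemma aux_bdd_condexp {Ω : Type*} {m0 : MeasurableSpace Ω} (μ : Measure Ω)
    (m : MeasurableSpace Ω) (s : Set Ω) :
    ∀ᵐ x ∂μ, ‖(μ⟦s | m⟧) x‖ ≤ 1 := by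
  have h := ae_bdd_condExp_of_ae_bdd (m := m) (μ := μ) (R := 1)
    (f := s.indicator fun _ => (1 : ℝ)) ?_
  · filter_upwards [h] with x hx
    simpa [Real.norm_eq_abs] using hx
  · refine ae_of_all μ fun x => ?_
    by_cases hx : x ∈ s <;> simp [hx]

/-- If `s` is "conditionally independent of `m₂` given `m₁`" in the condexp sense,
then the conditional expectation of `1ₛ` given `m₁ ⊔ m₂` equals that given `m₁`. -/
lemma aux_condexp_sup {Ω : Type*} (m₁ m₂ : MeasurableSpace Ω) {m0 : MeasurableSpace Ω}
    (μ : Measure Ω) [IsProbabilityMeasure μ] (h₁ : m₁ ≤ m0) (h₂ : m₂ ≤ m0)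
    {s : Set Ω} (hs : MeasurableSet[m0] s)
    (h : ∀ b, MeasurableSet[m₂] b → (μ⟦s ∩ b | m₁⟧) =ᵐ[μ] (μ⟦s | m₁⟧) * (μ⟦b | m₁⟧)) :
    (μ⟦s | m₁⟧) =ᵐ[μ] μ⟦s | m₁ ⊔ m₂⟧ := by
  have hm : m₁ ⊔ m₂ ≤ m0 := sup_le h₁ h₂
  have h_int : ∀ u : Set Ω, MeasurableSet[m0] u →
      Integrable (u.indicator fun _ => (1 : ℝ)) μ :=
    fun u hu => (integrable_const (μ := μ) (1 : ℝ)).indicator hu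
  refine ae_eq_condExp_of_forall_setIntegral_eq hm (h_int s hs)
    (fun _ _ _ => integrable_condExp.integrableOn) ?_
    (StronglyMeasurable.aestronglyMeasurable
      (stronglyMeasurable_condExp.mono le_sup_left))
  -- main step: equality of set integrals over all sets in `m₁ ⊔ m₂`
  intro A hA _
  revert hA
  have key : ∀ ⦃A : Set Ω⦄, MeasurableSet[m₁ ⊔ m₂] A →
      ∫ x in A, (μ⟦s | m₁⟧) x ∂μ = ∫ x in A, s.indicator (fun _ => (1 : ℝ)) x ∂μ := by
    refine MeasurableSpace.induction_on_inter (m := m₁ ⊔ m₂)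
      (aux_sup_eq_generateFrom m₁ m₂) (aux_isPiSystem m₁ m₂) (by simp) ?_ ?_ ?_
    · -- basic case: A = a ∩ b
      rintro u ⟨a, ha, b, hb, rfl⟩
      have hb0 : MeasurableSet[m0] b := h₂ b hb
      have ha0 : MeasurableSet[m0] a := h₁ a ha
      rw [← setIntegral_indicator (μ := μ) hb0, ← setIntegral_indicator (μ := μ) hb0]
      have e1 : (b.indicator fun x => (μ⟦s | m₁⟧) x)
          = (μ⟦s | m₁⟧) * b.indicator (fun _ => (1 : ℝ)) := by
        funext x; by_cases hx : x ∈ b <;> simp [hx]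
      have e2 : (b.indicator fun x => s.indicator (fun _ => (1 : ℝ)) x)
          = (s ∩ b).indicator (fun _ => (1 : ℝ)) := by
        funext x
        by_cases hx : x ∈ b <;> by_cases hxs : x ∈ s <;> simp [hx, hxs]
      rw [e1, e2]
      have pull : μ[(μ⟦s | m₁⟧) * b.indicator (fun _ => (1 : ℝ)) | m₁]
          =ᵐ[μ] (μ⟦s | m₁⟧) * (μ⟦b | m₁⟧) :=
        condExp_stronglyMeasurable_mul_of_bound h₁ stronglyMeasurable_condExp
          (h_int b hb0) 1 (aux_bdd_condexp μ m₁ s)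
      have hint : Integrable ((μ⟦s | m₁⟧) * b.indicator fun _ => (1 : ℝ)) μ := by
        rw [← e1]; exact integrable_condExp.indicator hb0
      calc ∫ x in a, ((μ⟦s | m₁⟧) * b.indicator fun _ => (1 : ℝ)) x ∂μ
          = ∫ x in a, (μ[(μ⟦s | m₁⟧) * b.indicator (fun _ => (1 : ℝ)) | m₁]) x ∂μ :=
            (setIntegral_condExp h₁ hint ha).symm
        _ = ∫ x in a, ((μ⟦s | m₁⟧) * (μ⟦b | m₁⟧)) x ∂μ :=
            integral_congr_ae (ae_restrict_of_ae pull)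
        _ = ∫ x in a, (μ⟦s ∩ b | m₁⟧) x ∂μ :=
            integral_congr_ae (ae_restrict_of_ae (h b hb).symm)
        _ = ∫ x in a, (s ∩ b).indicator (fun _ => (1 : ℝ)) x ∂μ :=
            setIntegral_condExp h₁ (h_int _ (hs.inter hb0)) ha
    · -- complement
      intro A hA hCA
      have hA0 : MeasurableSet[m0] A := hm A hA
      have tot1 : ∫ x, (μ⟦s | m₁⟧) x ∂μ = ∫ x, s.indicator (fun _ => (1 : ℝ)) x ∂μ :=
        integral_condExp (μ := μ) (f := s.indicator fun _ => (1 : ℝ)) h₁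
      have e1 := integral_add_compl (μ := μ) hA0 (integrable_condExp (m := m₁)
        (f := s.indicator fun _ => (1 : ℝ)) (μ := μ))
      have e2 := integral_add_compl (μ := μ) hA0 (h_int s hs)
      linarith
    · -- disjoint union
      intro f hdisj hmeas hC
      have hm0 : ∀ i, MeasurableSet[m0] (f i) := fun i => hm _ (hmeas i)
      rw [integral_iUnion (μ := μ) hm0 hdisj integrable_condExp.integrableOn,
        integral_iUnion (μ := μ) hm0 hdisj (h_int s hs).integrableOn]
      exact tsum_congr hC
  exact fun hA => key hA

lemma aux_comap_pair {Ω 𝒳 ℰ : Type*} [MeasurableSpace 𝒳] [MeasurableSpace ℰ]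
    (X : Ω → 𝒳) (E : Ω → ℰ) :
    MeasurableSpace.comap (fun ω => (X ω, E ω)) inferInstance =
      MeasurableSpace.comap X inferInstance ⊔ MeasurableSpace.comap E inferInstance := by
  rw [show (inferInstance : MeasurableSpace (𝒳 × ℰ)) =
      MeasurableSpace.comap Prod.fst inferInstance ⊔ MeasurableSpace.comap Prod.snd inferInstance
      from rfl,
    MeasurableSpace.comap_sup, MeasurableSpace.comap_comp, MeasurableSpace.comap_comp]
  rfl

/-- **Remark after Theorem 2.1** (marginal transfer learning, Kühmichel et al.).
Let `X, Y, E, S` be random variables on a probability space `Ω` taking values in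
standard Borel spaces.  Assume the data-generating model `Y ⟂ S ∣ (X, E)` and
that the environment is perfectly recoverable from the context set: `E = g ∘ S`
for a measurable `g`.  Then `Y ⟂ S ∣ X` holds if and only if `Y ⟂ E ∣ X` holds. -/
theorem remark_after_theorem_2_1
    {Ω : Type*} [MeasurableSpace Ω] [StandardBorelSpace Ω] [Nonempty Ω]
    (μ : Measure Ω) [IsProbabilityMeasure μ]
    {𝒳 𝒴 ℰ 𝒮 : Type*}
    [MeasurableSpace 𝒳] [StandardBorelSpace 𝒳]
    [MeasurableSpace 𝒴] [StandardBorelSpace 𝒴]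
    [MeasurableSpace ℰ] [StandardBorelSpace ℰ]
    [MeasurableSpace 𝒮] [StandardBorelSpace 𝒮]
    (X : Ω → 𝒳) (Y : Ω → 𝒴) (E : Ω → ℰ) (S : Ω → 𝒮)
    (hX : Measurable X) (hY : Measurable Y) (hE : Measurable E) (hS : Measurable S)
    -- data-generating model: `Y ⟂ S ∣ (X, E)`
    (h_model : CondIndepFun
      (MeasurableSpace.comap (fun ω => (X ω, E ω)) inferInstance)
      ((hX.prodMk hE).comap_le) Y S μ)
    -- the environment is a deterministic measurable function of the context set
    (g : 𝒮 → ℰ) (hg : Measurable g) (hgS : E = g ∘ S) :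
    -- `Y ⟂ S ∣ X` holds iff `Y ⟂ E ∣ X` holds
    (CondIndepFun (MeasurableSpace.comap X inferInstance) hX.comap_le Y S μ ↔
      CondIndepFun (MeasurableSpace.comap X inferInstance) hX.comap_le Y E μ) := by
  have hXEsup : MeasurableSpace.comap (fun ω => (X ω, E ω)) inferInstance =
      MeasurableSpace.comap X inferInstance ⊔ MeasurableSpace.comap E inferInstance :=
    aux_comap_pair X E
  constructor
  · intro hYS
    rw [hgS]
    exact hYS.comp measurable_id hg
  · intro hYE
    have hmodel' := (condIndepFun_iff _ _ Y S hY hS μ).mp h_model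
    have hYE' := (condIndepFun_iff _ _ Y E hY hE μ).mp hYE
    rw [condIndepFun_iff _ _ Y S hY hS μ]
    intro s t hs ht
    have hs0 : MeasurableSet s := hY.comap_le s hs
    have hmm : MeasurableSpace.comap X inferInstance ⊔ MeasurableSpace.comap E inferInstance
        ≤ ‹MeasurableSpace Ω› := sup_le hX.comap_le hE.comap_le
    have key : (μ⟦s | MeasurableSpace.comap X inferInstance⟧)
        =ᵐ[μ] μ⟦s | MeasurableSpace.comap X inferInstance ⊔ MeasurableSpace.comap E inferInstance⟧ :=
      aux_condexp_sup _ _ μ hX.comap_le hE.comap_le hs0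
        (fun b hb => hYE' s b hs hb)
    have hmodel2 : (μ⟦s ∩ t |
          MeasurableSpace.comap X inferInstance ⊔ MeasurableSpace.comap E inferInstance⟧)
        =ᵐ[μ] (μ⟦s | MeasurableSpace.comap X inferInstance ⊔ MeasurableSpace.comap E inferInstance⟧)
          * (μ⟦t | MeasurableSpace.comap X inferInstance ⊔ MeasurableSpace.comap E inferInstance⟧) := by
      have := hmodel' s t hs ht
      rwa [hXEsup] at this
    calc (μ⟦s ∩ t | MeasurableSpace.comap X inferInstance⟧)
        =ᵐ[μ] μ[(μ⟦s ∩ t | MeasurableSpace.comap X inferInstance ⊔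
            MeasurableSpace.comap E inferInstance⟧) | MeasurableSpace.comap X inferInstance] :=
          (condExp_condExp_of_le le_sup_left hmm).symm
      _ =ᵐ[μ] μ[(μ⟦s | MeasurableSpace.comap X inferInstance ⊔ MeasurableSpace.comap E inferInstance⟧)
            * (μ⟦t | MeasurableSpace.comap X inferInstance ⊔ MeasurableSpace.comap E inferInstance⟧) |
            MeasurableSpace.comap X inferInstance] := condExp_congr_ae hmodel2
      _ =ᵐ[μ] μ[(μ⟦s | MeasurableSpace.comap X inferInstance⟧)
            * (μ⟦t | MeasurableSpace.comap X inferInstance ⊔ MeasurableSpace.comap E inferInstance⟧) |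
            MeasurableSpace.comap X inferInstance] :=
          condExp_congr_ae (Filter.EventuallyEq.mul key.symm Filter.EventuallyEq.rfl)
      _ =ᵐ[μ] (μ⟦s | MeasurableSpace.comap X inferInstance⟧)
            * μ[(μ⟦t | MeasurableSpace.comap X inferInstance ⊔
              MeasurableSpace.comap E inferInstance⟧) | MeasurableSpace.comap X inferInstance] :=
          condExp_stronglyMeasurable_mul_of_bound hX.comap_le stronglyMeasurable_condExp
            integrable_condExp 1 (aux_bdd_condexp μ _ s)
      _ =ᵐ[μ] (μ⟦s | MeasurableSpace.comap X inferInstance⟧)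
            * (μ⟦t | MeasurableSpace.comap X inferInstance⟧) :=
          Filter.EventuallyEq.mul Filter.EventuallyEq.rfl (condExp_condExp_of_le le_sup_left hmm)
end

section
/- (Theorem A.1(d), generalization of Theorem 2.1 to noisy environments) Let X and Y be finite-valued random variables, S a random variable with values in a nonempty finite type 𝒮, Z : Ω → ℝ a random variable taking finitely many real values, and g : 𝒮 → ℝ a function; define the real-valued random variable E := g ∘ S + Z (which takes finitely many values). Assume S ⊥ Z | X, S ⊥ Z | (X, Y), and I(Y; E | X) > I(Y; Z | X). Then Y and S are NOT conditionally independent given X; equivalently, I(Y; S | X) > 0. -/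
open MeasureTheory

namespace MarginalTransfer

variable {Ω : Type*} [MeasurableSpace Ω]

/-- `P(A) := μ(A)`, as a real number. -/
noncomputable def pr (μ : Measure Ω) (A : Set Ω) : ℝ := (μ A).toReal

/-- Conditional mutual information
`I(U;V|W) := Σ_{u,v,w} P(U=u, V=v, W=w) ·
  log( (P(U=u, V=v, W=w) · P(W=w)) / (P(U=u, W=w) · P(V=v, W=w)) )`
for finitely-valued random variables; any summand whose leading factor
`P(U=u, V=v, W=w)` is zero vanishes. -/
noncomputable def condMI {α β γ : Type*} (μ : Measure Ω)
    (U : Ω → α) (V : Ω → β) (W : Ω → γ) : ℝ :=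
  ∑' u : α, ∑' v : β, ∑' w : γ,
    pr μ {ω | U ω = u ∧ V ω = v ∧ W ω = w} *
      Real.log (pr μ {ω | U ω = u ∧ V ω = v ∧ W ω = w} * pr μ {ω | W ω = w} /
        (pr μ {ω | U ω = u ∧ W ω = w} * pr μ {ω | V ω = v ∧ W ω = w}))

/-- Unconditional mutual information `I(U;V)`: the same formula with `W` a
constant random variable. -/
noncomputable def mutualInfo {α β : Type*} (μ : Measure Ω)
    (U : Ω → α) (V : Ω → β) : ℝ :=
  condMI μ U V (fun _ => (() : Unit))

/-- Conditional independence `U ⟂ V ∣ W`: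
`P(U=u, V=v, W=w) · P(W=w) = P(U=u, W=w) · P(V=v, W=w)` for all `u, v, w`. -/
def CondIndep {α β γ : Type*} (μ : Measure Ω)
    (U : Ω → α) (V : Ω → β) (W : Ω → γ) : Prop :=
  ∀ u v w,
    pr μ {ω | U ω = u ∧ V ω = v ∧ W ω = w} * pr μ {ω | W ω = w} =
      pr μ {ω | U ω = u ∧ W ω = w} * pr μ {ω | V ω = v ∧ W ω = w}

/-- Unconditional independence `U ⟂ V`: conditional independence given a
constant random variable. -/
def Indep {α β : Type*} (μ : Measure Ω) (U : Ω → α) (V : Ω → β) : Prop :=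
  CondIndep μ U V (fun _ => (() : Unit))

/-- Shannon entropy `H(U) := −Σ_u P(U=u) · log P(U=u)`. -/
noncomputable def entropy {α : Type*} (μ : Measure Ω) (U : Ω → α) : ℝ :=
  -∑' u : α, pr μ {ω | U ω = u} * Real.log (pr μ {ω | U ω = u})

/-- Conditional Shannon entropy
`H(U|V) := −Σ_{u,v} P(U=u, V=v) · log( P(U=u, V=v) / P(V=v) )`. -/
noncomputable def condEntropy {α β : Type*} (μ : Measure Ω)
    (U : Ω → α) (V : Ω → β) : ℝ :=
  -∑' u : α, ∑' v : β,
    pr μ {ω | U ω = u ∧ V ω = v} *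
      Real.log (pr μ {ω | U ω = u ∧ V ω = v} / pr μ {ω | V ω = v})

end MarginalTransfer

open MarginalTransfer

namespace MarginalTransfer

variable {Ω : Type*} [MeasurableSpace Ω]

theorem pr_nonneg (μ : Measure Ω) (A : Set Ω) : 0 ≤ pr μ A := ENNReal.toReal_nonneg

theorem pr_mono (μ : Measure Ω) [IsFiniteMeasure μ] {A B : Set Ω} (h : A ⊆ B) :
    pr μ A ≤ pr μ B :=
  ENNReal.toReal_mono (measure_ne_top μ B) (measure_mono h)

theorem pr_congr (μ : Measure Ω) {A B : Set Ω} (h : A = B) : pr μ A = pr μ B := by rw [h]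

theorem pr_empty (μ : Measure Ω) : pr μ (∅ : Set Ω) = 0 := by simp [pr]

theorem pr_univ (μ : Measure Ω) [IsProbabilityMeasure μ] : pr μ (Set.univ : Set Ω) = 1 := by
  simp [pr]

/-- Partition of an event by the (finitely many relevant) values of a random variable. -/
theorem pr_partition (μ : Measure Ω) [IsFiniteMeasure μ] {β : Type*} [MeasurableSpace β]
    [MeasurableSingletonClass β] [DecidableEq β]
    {V : Ω → β} (hV : Measurable V) (t : Finset β) {A : Set Ω} (hA : MeasurableSet A)
    (h : ∀ ω ∈ A, V ω ∈ t) :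
    pr μ A = ∑ i ∈ t, pr μ (A ∩ {ω | V ω = i}) := by
  have hAB : A = ⋃ i ∈ t, A ∩ {ω | V ω = i} := by
    ext ω
    simp only [Set.mem_iUnion, Set.mem_inter_iff, Set.mem_setOf_eq]
    constructor
    · intro hω; exact ⟨V ω, h ω hω, hω, rfl⟩
    · rintro ⟨i, _, hω, _⟩; exact hω
  have hdisj : (↑t : Set β).PairwiseDisjoint fun i => A ∩ {ω | V ω = i} := by
    intro i _ j _ hij
    refine Set.disjoint_left.2 ?_
    rintro ω ⟨-, hi⟩ ⟨-, hj⟩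
    exact hij (hi ▸ hj ▸ rfl)
  have hmeas : ∀ i ∈ t, MeasurableSet (A ∩ {ω | V ω = i}) := by
    intro i _
    exact hA.inter (hV (MeasurableSet.singleton i))
  calc pr μ A = (μ (⋃ i ∈ t, A ∩ {ω | V ω = i})).toReal := by rw [pr, ← hAB]
    _ = ∑ i ∈ t, pr μ (A ∩ {ω | V ω = i}) := by
        rw [measure_biUnion_finset hdisj hmeas,
          ENNReal.toReal_sum (fun a _ => measure_ne_top μ _)]
        rfl

theorem mul_log_div_ge {a b : ℝ} (ha : 0 ≤ a) (hb : 0 ≤ b) (hab : a ≠ 0 → b ≠ 0) :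
    a - b ≤ a * Real.log (a / b) := by
  rcases eq_or_lt_of_le ha with h | h
  · rw [← h, zero_mul, zero_sub]
    exact neg_nonpos.2 hb
  · have hb' : 0 < b := lt_of_le_of_ne hb (Ne.symm (hab h.ne'))
    have h1 : Real.log (b / a) ≤ b / a - 1 := Real.log_le_sub_one_of_pos (by positivity)
    have h2 : Real.log (a / b) = -Real.log (b / a) := by
      rw [← Real.log_inv]; congr 1; field_simp
    rw [h2]
    have := mul_le_mul_of_nonneg_left h1 ha
    have h3 : a * (b / a - 1) = b - a := by field_simp
    nlinarith
  
theorem mul_log_div_gt {a b : ℝ} (ha : 0 ≤ a) (hb : 0 ≤ b) (hab : a ≠ 0 → b ≠ 0)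
    (hne : a ≠ b) : a - b < a * Real.log (a / b) := by
  rcases eq_or_lt_of_le ha with h | h
  · have hb' : 0 < b := lt_of_le_of_ne hb (fun hb0 => hne (by rw [← h, ← hb0]))
    rw [← h, zero_mul, zero_sub]
    linarith
  · have hb' : 0 < b := lt_of_le_of_ne hb (Ne.symm (hab h.ne'))
    have hba : b / a ≠ 1 := by
      intro hh
      apply hne
      field_simp at hh
      linarith
    have h1 : Real.log (b / a) < b / a - 1 := Real.log_lt_sub_one_of_pos (by positivity) hba
    have h2 : Real.log (a / b) = -Real.log (b / a) := by
      rw [← Real.log_inv]; congr 1; field_simp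
    rw [h2]
    have := mul_lt_mul_of_pos_left h1 h
    have h3 : a * (b / a - 1) = b - a := by field_simp
    nlinarith

/-- Gibbs / log-sum inequality, sum form. -/
theorem sum_mul_log_div_ge {ι : Type*} (s : Finset ι) (p q : ι → ℝ)
    (hp : ∀ i ∈ s, 0 ≤ p i) (hq : ∀ i ∈ s, 0 ≤ q i)
    (hpq : ∀ i ∈ s, p i ≠ 0 → q i ≠ 0) :
    (∑ i ∈ s, p i) - (∑ i ∈ s, q i) ≤ ∑ i ∈ s, p i * Real.log (p i / q i) := by
  rw [← Finset.sum_sub_distrib]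
  exact Finset.sum_le_sum fun i hi => mul_log_div_ge (hp i hi) (hq i hi) (hpq i hi)

theorem sum_mul_log_div_pos {ι : Type*} (s : Finset ι) (p q : ι → ℝ)
    (hp : ∀ i ∈ s, 0 ≤ p i) (hq : ∀ i ∈ s, 0 ≤ q i)
    (hpq : ∀ i ∈ s, p i ≠ 0 → q i ≠ 0)
    (hsum : ∑ i ∈ s, q i ≤ ∑ i ∈ s, p i)
    {i0 : ι} (hi0 : i0 ∈ s) (hne : p i0 ≠ q i0) :
    0 < ∑ i ∈ s, p i * Real.log (p i / q i) := by
  have h : ∑ i ∈ s, (p i - q i) < ∑ i ∈ s, p i * Real.log (p i / q i) := by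
    refine Finset.sum_lt_sum (fun i hi => mul_log_div_ge (hp i hi) (hq i hi) (hpq i hi))
      ⟨i0, hi0, mul_log_div_gt (hp i0 hi0) (hq i0 hi0) (hpq i0 hi0) hne⟩
  rw [Finset.sum_sub_distrib] at h
  linarith

/-- Log-sum inequality: `(Σp) log(Σp/Σq) ≤ Σ pᵢ log(pᵢ/qᵢ)`. -/
theorem log_sum_inequality {ι : Type*} (s : Finset ι) (p q : ι → ℝ)
    (hp : ∀ i ∈ s, 0 ≤ p i) (hq : ∀ i ∈ s, 0 ≤ q i)
    (hpq : ∀ i ∈ s, p i ≠ 0 → q i ≠ 0) :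
    (∑ i ∈ s, p i) * Real.log ((∑ i ∈ s, p i) / (∑ i ∈ s, q i)) ≤
      ∑ i ∈ s, p i * Real.log (p i / q i) := by
  set P := ∑ i ∈ s, p i with hP
  set Q := ∑ i ∈ s, q i with hQ
  by_cases hP0 : P = 0
  · have hall : ∀ i ∈ s, p i = 0 := (Finset.sum_eq_zero_iff_of_nonneg hp).1 hP0
    rw [hP0]
    simp only [zero_mul]
    refine Finset.sum_nonneg fun i hi => ?_
    rw [hall i hi]; simp
  · have hPpos : 0 < P := lt_of_le_of_ne (Finset.sum_nonneg hp) (Ne.symm hP0)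
    obtain ⟨i1, hi1, hpi1⟩ : ∃ i ∈ s, p i ≠ 0 := by
      by_contra hc
      push_neg at hc
      exact hP0 (Finset.sum_eq_zero hc)
    have hQpos : 0 < Q := by
      calc (0:ℝ) < q i1 := lt_of_le_of_ne (hq i1 hi1) (Ne.symm (hpq i1 hi1 hpi1))
      _ ≤ Q := Finset.single_le_sum hq hi1
    have key : ∀ i ∈ s, p i - q i * (P / Q) + p i * Real.log (P / Q) ≤
        p i * Real.log (p i / q i) := by
      intro i hi
      rcases eq_or_lt_of_le (hp i hi) with h | h
      · rw [← h]
        simp only [zero_sub, zero_mul, add_zero, neg_nonpos]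
        exact mul_nonneg (hq i hi) (div_pos hPpos hQpos).le
      · have hqi : 0 < q i := lt_of_le_of_ne (hq i hi) (Ne.symm (hpq i hi h.ne'))
        have hb0 : 0 < q i * (P / Q) := mul_pos hqi (div_pos hPpos hQpos)
        have hsplit : Real.log (p i / q i) =
            Real.log (p i / (q i * (P / Q))) + Real.log (P / Q) := by
          rw [← Real.log_mul (ne_of_gt (div_pos h hb0)) (ne_of_gt (div_pos hPpos hQpos))]
          congr 1
          field_simp
        rw [hsplit, mul_add]
        have := mul_log_div_ge (a := p i) (b := q i * (P / Q)) h.le hb0.le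
          (fun _ => hb0.ne')
        linarith
    calc P * Real.log (P / Q)
        = P - Q * (P / Q) + P * Real.log (P / Q) := by
          rw [mul_comm Q (P / Q), div_mul_cancel₀ P hQpos.ne']; ring
      _ = ∑ i ∈ s, (p i - q i * (P / Q) + p i * Real.log (P / Q)) := by
          rw [Finset.sum_add_distrib, Finset.sum_sub_distrib, ← hP, ← Finset.sum_mul,
            ← Finset.sum_mul, ← hP, ← hQ]
      _ ≤ _ := Finset.sum_le_sum key

theorem condMI_pos {α β γ : Type*}
    [Fintype α] [MeasurableSpace α] [MeasurableSingletonClass α]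
    [Fintype β] [MeasurableSpace β] [MeasurableSingletonClass β]
    [Fintype γ] [MeasurableSpace γ] [MeasurableSingletonClass γ]
    (μ : Measure Ω) [IsProbabilityMeasure μ]
    {U : Ω → α} {V : Ω → β} {W : Ω → γ}
    (hU : Measurable U) (hV : Measurable V) (hW : Measurable W)
    (h : ¬ CondIndep μ U V W) : 0 < condMI μ U V W := by
  classical
  rw [CondIndep] at h
  push_neg at h
  obtain ⟨u0, v0, w0, hne0⟩ := h
  set p : α × β × γ → ℝ :=
    fun i => pr μ {ω | U ω = i.1 ∧ V ω = i.2.1 ∧ W ω = i.2.2} with hpdef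
  set q : α × β × γ → ℝ :=
    fun i => pr μ {ω | U ω = i.1 ∧ W ω = i.2.2} * pr μ {ω | V ω = i.2.1 ∧ W ω = i.2.2} /
      pr μ {ω | W ω = i.2.2} with hqdef
  -- marginal sums
  have hUW : ∀ w : γ, ∑ u : α, pr μ {ω | U ω = u ∧ W ω = w} = pr μ {ω | W ω = w} := by
    intro w
    rw [pr_partition μ hU Finset.univ (A := {ω | W ω = w})
      (hW (MeasurableSet.singleton w)) (fun ω _ => Finset.mem_univ _)]
    exact Finset.sum_congr rfl fun u _ => by
      congr 1; ext ω; simp only [Set.mem_inter_iff, Set.mem_setOf_eq]; tauto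
  have hVW : ∀ w : γ, ∑ v : β, pr μ {ω | V ω = v ∧ W ω = w} = pr μ {ω | W ω = w} := by
    intro w
    rw [pr_partition μ hV Finset.univ (A := {ω | W ω = w})
      (hW (MeasurableSet.singleton w)) (fun ω _ => Finset.mem_univ _)]
    exact Finset.sum_congr rfl fun v _ => by
      congr 1; ext ω; simp only [Set.mem_inter_iff, Set.mem_setOf_eq]; tauto
  have hW1 : ∑ w : γ, pr μ {ω | W ω = w} = 1 := by
    have := pr_partition μ hW Finset.univ (A := (Set.univ : Set Ω))
      MeasurableSet.univ (fun ω _ => Finset.mem_univ _)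
    have huniv : pr μ (Set.univ : Set Ω) = 1 := by simp [pr]
    rw [huniv] at this
    rw [this]
    exact Finset.sum_congr rfl fun w _ => by
      congr 1; ext ω; simp only [Set.mem_inter_iff, Set.mem_setOf_eq, Set.mem_univ]; tauto
  -- sum of p is 1
  have hsump : ∑ i : α × β × γ, p i = 1 := by
    have hmeas : Measurable fun ω => (U ω, V ω, W ω) :=
      hU.prodMk (hV.prodMk hW)
    have := pr_partition μ hmeas Finset.univ (A := (Set.univ : Set Ω))
      MeasurableSet.univ (fun ω _ => Finset.mem_univ _)
    have huniv : pr μ (Set.univ : Set Ω) = 1 := by simp [pr]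
    rw [huniv] at this
    rw [this]
    refine Finset.sum_congr rfl fun i _ => ?_
    simp only [hpdef]
    congr 1; ext ω
    simp only [Set.mem_inter_iff, Set.mem_setOf_eq, Set.mem_univ, true_and, Prod.ext_iff]
  -- sum of q
  have hsumq : ∑ i : α × β × γ, q i ≤ 1 := by
    have inner : ∀ w : γ,
        (∑ u : α, ∑ v : β, pr μ {ω | U ω = u ∧ W ω = w} * pr μ {ω | V ω = v ∧ W ω = w} /
          pr μ {ω | W ω = w})
        = pr μ {ω | W ω = w} * pr μ {ω | W ω = w} / pr μ {ω | W ω = w} := by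
      intro w
      have h1 : (∑ u : α, pr μ {ω | U ω = u ∧ W ω = w}) *
          (∑ v : β, pr μ {ω | V ω = v ∧ W ω = w}) / pr μ {ω | W ω = w}
          = ∑ u : α, ∑ v : β, pr μ {ω | U ω = u ∧ W ω = w} * pr μ {ω | V ω = v ∧ W ω = w} /
            pr μ {ω | W ω = w} := by
        rw [Finset.sum_mul_sum]
        simp only [Finset.sum_div]
      rw [← h1, hUW w, hVW w]
    have hq' : ∑ i : α × β × γ, q i = ∑ w : γ,
        pr μ {ω | W ω = w} * pr μ {ω | W ω = w} / pr μ {ω | W ω = w} := by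
      simp only [hqdef, Fintype.sum_prod_type]
      calc (∑ u : α, ∑ v : β, ∑ w : γ,
            pr μ {ω | U ω = u ∧ W ω = w} * pr μ {ω | V ω = v ∧ W ω = w} / pr μ {ω | W ω = w})
          = ∑ u : α, ∑ w : γ, ∑ v : β,
            pr μ {ω | U ω = u ∧ W ω = w} * pr μ {ω | V ω = v ∧ W ω = w} / pr μ {ω | W ω = w} :=
            Finset.sum_congr rfl fun u _ => Finset.sum_comm
        _ = ∑ w : γ, ∑ u : α, ∑ v : β,
            pr μ {ω | U ω = u ∧ W ω = w} * pr μ {ω | V ω = v ∧ W ω = w} / pr μ {ω | W ω = w} :=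
            Finset.sum_comm
        _ = _ := Finset.sum_congr rfl fun w _ => inner w
    rw [hq', ← hW1]
    refine Finset.sum_le_sum fun w _ => ?_
    by_cases hw : pr μ {ω | W ω = w} = 0
    · rw [hw]; simp
    · rw [mul_div_assoc, div_self hw, mul_one]
  -- rewrite condMI as a single product sum
  have hMI : condMI μ U V W = ∑ i : α × β × γ, p i * Real.log (p i / q i) := by
    rw [condMI]
    simp only [tsum_fintype, hpdef, hqdef, Fintype.sum_prod_type]
    refine Finset.sum_congr rfl fun u _ => Finset.sum_congr rfl fun v _ =>
      Finset.sum_congr rfl fun w _ => ?_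
    rw [div_div_eq_mul_div]
  rw [hMI]
  refine sum_mul_log_div_pos Finset.univ p q (fun i _ => pr_nonneg μ _)
    (fun i _ => ?_) (fun i _ hne => ?_) ?_ (Finset.mem_univ (u0, v0, w0)) ?_
  · exact div_nonneg (mul_nonneg (pr_nonneg μ _) (pr_nonneg μ _)) (pr_nonneg μ _)
  · -- p i ≠ 0 → q i ≠ 0
    have hppos : 0 < p i := lt_of_le_of_ne (pr_nonneg μ _) (Ne.symm hne)
    have h1 : p i ≤ pr μ {ω | U ω = i.1 ∧ W ω = i.2.2} :=
      pr_mono μ (fun ω hh => ⟨hh.1, hh.2.2⟩)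
    have h2 : p i ≤ pr μ {ω | V ω = i.2.1 ∧ W ω = i.2.2} :=
      pr_mono μ (fun ω hh => ⟨hh.2.1, hh.2.2⟩)
    have h3 : pr μ {ω | W ω = i.2.2} ≤ 1 := by
      have : pr μ (Set.univ : Set Ω) = 1 := by simp [pr]
      rw [← this]; exact pr_mono μ (Set.subset_univ _)
    have h4 : 0 < pr μ {ω | W ω = i.2.2} :=
      lt_of_lt_of_le hppos (pr_mono μ (fun ω hh => hh.2.2))
    have : 0 < q i := by
      simp only [hqdef]
      exact div_pos (mul_pos (lt_of_lt_of_le hppos h1) (lt_of_lt_of_le hppos h2)) h4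
    exact this.ne'
  · rw [hsump]; exact hsumq
  · -- p i0 ≠ q i0
    simp only [hpdef, hqdef]
    by_cases hw : pr μ {ω | W ω = w0} = 0
    · exfalso
      apply hne0
      have hp0 : pr μ {ω | U ω = u0 ∧ V ω = v0 ∧ W ω = w0} = 0 := by
        have hle := pr_mono μ (A := {ω | U ω = u0 ∧ V ω = v0 ∧ W ω = w0})
          (B := {ω | W ω = w0}) (fun ω hh => hh.2.2)
        rw [hw] at hle
        have := pr_nonneg μ {ω | U ω = u0 ∧ V ω = v0 ∧ W ω = w0}
        linarith
      have hu0 : pr μ {ω | U ω = u0 ∧ W ω = w0} = 0 := by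
        have hle := pr_mono μ (A := {ω | U ω = u0 ∧ W ω = w0})
          (B := {ω | W ω = w0}) (fun ω hh => hh.2)
        rw [hw] at hle
        have := pr_nonneg μ {ω | U ω = u0 ∧ W ω = w0}
        linarith
      rw [hp0, hu0, hw, mul_zero, zero_mul]
    · intro hcontra
      apply hne0
      rw [hcontra, div_mul_cancel₀ _ hw]

end MarginalTransfer

/-- **Theorem A.1(d)** (generalization of Theorem 2.1 to noisy environments).
Let `X, Y` be finite-valued random variables, `S` a random variable with values
in a nonempty finite type, `Z : Ω → ℝ` a random variable taking finitely many
real values, and `E := g ∘ S + Z`.  If `S ⟂ Z ∣ X`, `S ⟂ Z ∣ (X, Y)` and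
`I(Y; E ∣ X) > I(Y; Z ∣ X)`, then `Y` and `S` are not conditionally independent
given `X`; equivalently, `I(Y; S ∣ X) > 0`. -/
theorem theorem_A_1_d
    {Ω : Type*} [MeasurableSpace Ω] (μ : Measure Ω) [IsProbabilityMeasure μ]
    {𝒳 𝒴 𝒮 : Type*}
    [Fintype 𝒳] [Nonempty 𝒳] [MeasurableSpace 𝒳] [MeasurableSingletonClass 𝒳]
    [Fintype 𝒴] [Nonempty 𝒴] [MeasurableSpace 𝒴] [MeasurableSingletonClass 𝒴]
    [Fintype 𝒮] [Nonempty 𝒮] [MeasurableSpace 𝒮] [MeasurableSingletonClass 𝒮]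
    (X : Ω → 𝒳) (Y : Ω → 𝒴) (S : Ω → 𝒮) (Z : Ω → ℝ)
    (hX : Measurable X) (hY : Measurable Y) (hS : Measurable S) (hZ : Measurable Z)
    (hZfin : (Set.range Z).Finite)
    (g : 𝒮 → ℝ) (E : Ω → ℝ) (hE : E = fun ω => g (S ω) + Z ω)
    (hSZ_X : CondIndep μ S Z X)
    (hSZ_XY : CondIndep μ S Z (fun ω => (X ω, Y ω)))
    (hMI : condMI μ Y Z X < condMI μ Y E X) :
    ¬ CondIndep μ Y S X ∧ 0 < condMI μ Y S X := by
  classical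
  have hEmeas : Measurable E := by
    rw [hE]; exact ((measurable_of_countable g).comp hS).add hZ
  set T : Finset ℝ := hZfin.toFinset with hTdef
  have hT : ∀ ω, Z ω ∈ T := fun ω => hZfin.mem_toFinset.2 ⟨ω, rfl⟩
  set FE : Finset ℝ :=
    ((Finset.univ : Finset 𝒮) ×ˢ T).image (fun p : 𝒮 × ℝ => g p.1 + p.2) with hFEdef
  have hFE : ∀ ω, E ω ∈ FE := by
    intro ω
    refine Finset.mem_image.2 ⟨(S ω, Z ω), Finset.mem_product.2 ⟨Finset.mem_univ _, hT ω⟩, ?_⟩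
    rw [hE]
  -- the key inequality under conditional independence of Y and S given X
  have key : CondIndep μ Y S X → condMI μ Y E X ≤ condMI μ Y Z X := by
    intro H
    -- (A) : S ⟂ Z | X, reordered
    have hA : ∀ z s x, pr μ {ω | Z ω = z ∧ S ω = s ∧ X ω = x} * pr μ {ω | X ω = x}
        = pr μ {ω | Z ω = z ∧ X ω = x} * pr μ {ω | S ω = s ∧ X ω = x} := by
      intro z s x
      have h1 := hSZ_X s z x
      have e1 : {ω | S ω = s ∧ Z ω = z ∧ X ω = x} = {ω | Z ω = z ∧ S ω = s ∧ X ω = x} := by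
        ext ω; simp only [Set.mem_setOf_eq]; tauto
      rw [e1] at h1
      rw [h1]; exact mul_comm _ _
    -- (D) : S ⟂ (Y,Z) | X
    have hD : ∀ y z s x,
        pr μ {ω | Y ω = y ∧ Z ω = z ∧ S ω = s ∧ X ω = x} * pr μ {ω | X ω = x}
        = pr μ {ω | Y ω = y ∧ Z ω = z ∧ X ω = x} * pr μ {ω | S ω = s ∧ X ω = x} := by
      intro y z s x
      have hB := hSZ_XY s z (x, y)
      have e1 : {ω | S ω = s ∧ Z ω = z ∧ (X ω, Y ω) = (x, y)}
          = {ω | Y ω = y ∧ Z ω = z ∧ S ω = s ∧ X ω = x} := by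
        ext ω; simp only [Set.mem_setOf_eq, Prod.ext_iff]; tauto
      have e2 : {ω | (fun ω => (X ω, Y ω)) ω = (x, y)} = {ω | Y ω = y ∧ X ω = x} := by
        ext ω; simp only [Set.mem_setOf_eq, Prod.ext_iff]; tauto
      have e3 : {ω | S ω = s ∧ (X ω, Y ω) = (x, y)} = {ω | Y ω = y ∧ S ω = s ∧ X ω = x} := by
        ext ω; simp only [Set.mem_setOf_eq, Prod.ext_iff]; tauto
      have e4 : {ω | Z ω = z ∧ (X ω, Y ω) = (x, y)} = {ω | Y ω = y ∧ Z ω = z ∧ X ω = x} := by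
        ext ω; simp only [Set.mem_setOf_eq, Prod.ext_iff]; tauto
      rw [e1, e2, e3, e4] at hB
      -- hB : pr{Y,Z,S,X} * pr{Y,X} = pr{Y,S,X} * pr{Y,Z,X}
      have hC := H y s x
      -- hC : pr{Y,S,X} * pr{X} = pr{Y,X} * pr{S,X}
      by_cases hyx : pr μ {ω | Y ω = y ∧ X ω = x} = 0
      · have h5 : pr μ {ω | Y ω = y ∧ Z ω = z ∧ S ω = s ∧ X ω = x} = 0 := by
          have hle := pr_mono μ (A := {ω | Y ω = y ∧ Z ω = z ∧ S ω = s ∧ X ω = x})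
            (B := {ω | Y ω = y ∧ X ω = x}) (fun ω hh => ⟨hh.1, hh.2.2.2⟩)
          rw [hyx] at hle
          exact le_antisymm hle (pr_nonneg μ _)
        have h6 : pr μ {ω | Y ω = y ∧ Z ω = z ∧ X ω = x} = 0 := by
          have hle := pr_mono μ (A := {ω | Y ω = y ∧ Z ω = z ∧ X ω = x})
            (B := {ω | Y ω = y ∧ X ω = x}) (fun ω hh => ⟨hh.1, hh.2.2⟩)
          rw [hyx] at hle
          exact le_antisymm hle (pr_nonneg μ _)
        rw [h5, h6, zero_mul, zero_mul]
      · apply mul_right_cancel₀ hyx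
        linear_combination pr μ {ω | X ω = x} * hB +
          pr μ {ω | Y ω = y ∧ Z ω = z ∧ X ω = x} * hC
    -- partition lemmas
    have hmYEX : ∀ (y : 𝒴) (e : ℝ) (x : 𝒳),
        MeasurableSet {ω | Y ω = y ∧ E ω = e ∧ X ω = x} :=
      fun y e x => (hY (measurableSet_singleton y)).inter
        ((hEmeas (measurableSet_singleton e)).inter (hX (measurableSet_singleton x)))
    have hmEX : ∀ (e : ℝ) (x : 𝒳), MeasurableSet {ω | E ω = e ∧ X ω = x} :=
      fun e x => (hEmeas (measurableSet_singleton e)).inter (hX (measurableSet_singleton x))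
    have hmYZX : ∀ (y : 𝒴) (z : ℝ) (x : 𝒳),
        MeasurableSet {ω | Y ω = y ∧ Z ω = z ∧ X ω = x} :=
      fun y z x => (hY (measurableSet_singleton y)).inter
        ((hZ (measurableSet_singleton z)).inter (hX (measurableSet_singleton x)))
    have hparA : ∀ (y : 𝒴) (x : 𝒳) (e : ℝ),
        pr μ {ω | Y ω = y ∧ E ω = e ∧ X ω = x} =
        ∑ i ∈ (Finset.univ ×ˢ T).filter (fun p : 𝒮 × ℝ => g p.1 + p.2 = e),
          pr μ {ω | Y ω = y ∧ Z ω = i.2 ∧ S ω = i.1 ∧ X ω = x} := by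
      intro y x e
      rw [pr_partition μ (hS.prodMk hZ)
        ((Finset.univ ×ˢ T).filter (fun p : 𝒮 × ℝ => g p.1 + p.2 = e))
        (A := {ω | Y ω = y ∧ E ω = e ∧ X ω = x}) (hmYEX y e x) ?_]
      · refine Finset.sum_congr rfl fun i hi => ?_
        obtain ⟨-, hie⟩ := Finset.mem_filter.1 hi
        congr 1
        ext ω
        simp only [Set.mem_inter_iff, Set.mem_setOf_eq, Prod.ext_iff]
        constructor
        · rintro ⟨⟨h1, h2, h3⟩, h4, h5⟩; exact ⟨h1, h5, h4, h3⟩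
        · rintro ⟨h1, h5, h4, h3⟩
          refine ⟨⟨h1, ?_, h3⟩, h4, h5⟩
          rw [hE]; simp only; rw [h4, h5]; exact hie
      · intro ω hω
        refine Finset.mem_filter.2 ⟨Finset.mem_product.2 ⟨Finset.mem_univ _, hT ω⟩, ?_⟩
        have h2 : E ω = e := hω.2.1
        rw [hE] at h2; exact h2
    have hparB : ∀ (x : 𝒳) (e : ℝ),
        pr μ {ω | E ω = e ∧ X ω = x} =
        ∑ i ∈ (Finset.univ ×ˢ T).filter (fun p : 𝒮 × ℝ => g p.1 + p.2 = e),
          pr μ {ω | Z ω = i.2 ∧ S ω = i.1 ∧ X ω = x} := by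
      intro x e
      rw [pr_partition μ (hS.prodMk hZ)
        ((Finset.univ ×ˢ T).filter (fun p : 𝒮 × ℝ => g p.1 + p.2 = e))
        (A := {ω | E ω = e ∧ X ω = x}) (hmEX e x) ?_]
      · refine Finset.sum_congr rfl fun i hi => ?_
        obtain ⟨-, hie⟩ := Finset.mem_filter.1 hi
        congr 1
        ext ω
        simp only [Set.mem_inter_iff, Set.mem_setOf_eq, Prod.ext_iff]
        constructor
        · rintro ⟨⟨h2, h3⟩, h4, h5⟩; exact ⟨h5, h4, h3⟩
        · rintro ⟨h5, h4, h3⟩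
          refine ⟨⟨?_, h3⟩, h4, h5⟩
          rw [hE]; simp only; rw [h4, h5]; exact hie
      · intro ω hω
        refine Finset.mem_filter.2 ⟨Finset.mem_product.2 ⟨Finset.mem_univ _, hT ω⟩, ?_⟩
        have h2 : E ω = e := hω.1
        rw [hE] at h2; exact h2
    have hparS : ∀ (y : 𝒴) (z : ℝ) (x : 𝒳),
        pr μ {ω | Y ω = y ∧ Z ω = z ∧ X ω = x} =
        ∑ s : 𝒮, pr μ {ω | Y ω = y ∧ Z ω = z ∧ S ω = s ∧ X ω = x} := by
      intro y z x
      rw [pr_partition μ hS Finset.univ (A := {ω | Y ω = y ∧ Z ω = z ∧ X ω = x})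
        (hmYZX y z x) (fun ω _ => Finset.mem_univ _)]
      refine Finset.sum_congr rfl fun s _ => ?_
      congr 1; ext ω
      simp only [Set.mem_inter_iff, Set.mem_setOf_eq]; tauto
    -- per (y, x) core inequality
    have main_yx : ∀ (y : 𝒴) (x : 𝒳),
        (∑ e ∈ FE, pr μ {ω | Y ω = y ∧ E ω = e ∧ X ω = x} *
          Real.log (pr μ {ω | Y ω = y ∧ E ω = e ∧ X ω = x} * pr μ {ω | X ω = x} /
            (pr μ {ω | Y ω = y ∧ X ω = x} * pr μ {ω | E ω = e ∧ X ω = x})))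
        ≤ ∑ z ∈ T, pr μ {ω | Y ω = y ∧ Z ω = z ∧ X ω = x} *
          Real.log (pr μ {ω | Y ω = y ∧ Z ω = z ∧ X ω = x} * pr μ {ω | X ω = x} /
            (pr μ {ω | Y ω = y ∧ X ω = x} * pr μ {ω | Z ω = z ∧ X ω = x})) := by
      intro y x
      -- step 2 : termwise identification with the Z-log
      have step2 : ∀ i : 𝒮 × ℝ,
          pr μ {ω | Y ω = y ∧ Z ω = i.2 ∧ S ω = i.1 ∧ X ω = x} *
            Real.log (pr μ {ω | Y ω = y ∧ Z ω = i.2 ∧ S ω = i.1 ∧ X ω = x} /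
              (pr μ {ω | Y ω = y ∧ X ω = x} * pr μ {ω | Z ω = i.2 ∧ S ω = i.1 ∧ X ω = x} /
                pr μ {ω | X ω = x}))
          = pr μ {ω | Y ω = y ∧ Z ω = i.2 ∧ S ω = i.1 ∧ X ω = x} *
            Real.log (pr μ {ω | Y ω = y ∧ Z ω = i.2 ∧ X ω = x} * pr μ {ω | X ω = x} /
              (pr μ {ω | Y ω = y ∧ X ω = x} * pr μ {ω | Z ω = i.2 ∧ X ω = x})) := by
        rintro ⟨s, z⟩
        simp only
        by_cases h0 : pr μ {ω | Y ω = y ∧ Z ω = z ∧ S ω = s ∧ X ω = x} = 0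
        · rw [h0, zero_mul, zero_mul]
        · have hpos : 0 < pr μ {ω | Y ω = y ∧ Z ω = z ∧ S ω = s ∧ X ω = x} :=
            lt_of_le_of_ne (pr_nonneg μ _) (Ne.symm h0)
          have hyx : 0 < pr μ {ω | Y ω = y ∧ X ω = x} :=
            lt_of_lt_of_le hpos (pr_mono μ (fun ω hh => ⟨hh.1, hh.2.2.2⟩))
          have hzsx : 0 < pr μ {ω | Z ω = z ∧ S ω = s ∧ X ω = x} :=
            lt_of_lt_of_le hpos (pr_mono μ (fun ω hh => ⟨hh.2.1, hh.2.2.1, hh.2.2.2⟩))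
          have hx0 : 0 < pr μ {ω | X ω = x} :=
            lt_of_lt_of_le hpos (pr_mono μ (fun ω hh => hh.2.2.2))
          have hyzx : 0 < pr μ {ω | Y ω = y ∧ Z ω = z ∧ X ω = x} :=
            lt_of_lt_of_le hpos (pr_mono μ (fun ω hh => ⟨hh.1, hh.2.1, hh.2.2.2⟩))
          have hzx : 0 < pr μ {ω | Z ω = z ∧ X ω = x} :=
            lt_of_lt_of_le hpos (pr_mono μ (fun ω hh => ⟨hh.2.1, hh.2.2.2⟩))
          have harg : pr μ {ω | Y ω = y ∧ Z ω = z ∧ S ω = s ∧ X ω = x} /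
              (pr μ {ω | Y ω = y ∧ X ω = x} * pr μ {ω | Z ω = z ∧ S ω = s ∧ X ω = x} /
                pr μ {ω | X ω = x})
              = pr μ {ω | Y ω = y ∧ Z ω = z ∧ X ω = x} * pr μ {ω | X ω = x} /
                (pr μ {ω | Y ω = y ∧ X ω = x} * pr μ {ω | Z ω = z ∧ X ω = x}) := by
            rw [div_div_eq_mul_div]
            rw [div_eq_div_iff (by positivity) (by positivity)]
            linear_combination (pr μ {ω | Y ω = y ∧ X ω = x} * pr μ {ω | Z ω = z ∧ X ω = x}) *
                hD y z s x -
              (pr μ {ω | Y ω = y ∧ Z ω = z ∧ X ω = x} * pr μ {ω | Y ω = y ∧ X ω = x}) *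
                hA z s x
          rw [harg]
      -- step 1 : data processing via the log-sum inequality, per e
      have step1 : ∀ e ∈ FE,
          pr μ {ω | Y ω = y ∧ E ω = e ∧ X ω = x} *
            Real.log (pr μ {ω | Y ω = y ∧ E ω = e ∧ X ω = x} * pr μ {ω | X ω = x} /
              (pr μ {ω | Y ω = y ∧ X ω = x} * pr μ {ω | E ω = e ∧ X ω = x}))
          ≤ ∑ i ∈ (Finset.univ ×ˢ T).filter (fun p : 𝒮 × ℝ => g p.1 + p.2 = e),
              pr μ {ω | Y ω = y ∧ Z ω = i.2 ∧ S ω = i.1 ∧ X ω = x} *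
                Real.log (pr μ {ω | Y ω = y ∧ Z ω = i.2 ∧ X ω = x} * pr μ {ω | X ω = x} /
                  (pr μ {ω | Y ω = y ∧ X ω = x} * pr μ {ω | Z ω = i.2 ∧ X ω = x})) := by
        intro e _
        set fib := (Finset.univ ×ˢ T).filter (fun p : 𝒮 × ℝ => g p.1 + p.2 = e) with hfib
        have hsum_q' : ∑ i ∈ fib,
            pr μ {ω | Y ω = y ∧ X ω = x} * pr μ {ω | Z ω = i.2 ∧ S ω = i.1 ∧ X ω = x} /
              pr μ {ω | X ω = x}
            = pr μ {ω | Y ω = y ∧ X ω = x} * pr μ {ω | E ω = e ∧ X ω = x} /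
              pr μ {ω | X ω = x} := by
          rw [hparB x e, Finset.mul_sum, Finset.sum_div]
        calc pr μ {ω | Y ω = y ∧ E ω = e ∧ X ω = x} *
              Real.log (pr μ {ω | Y ω = y ∧ E ω = e ∧ X ω = x} * pr μ {ω | X ω = x} /
                (pr μ {ω | Y ω = y ∧ X ω = x} * pr μ {ω | E ω = e ∧ X ω = x}))
            = (∑ i ∈ fib, pr μ {ω | Y ω = y ∧ Z ω = i.2 ∧ S ω = i.1 ∧ X ω = x}) *
              Real.log ((∑ i ∈ fib, pr μ {ω | Y ω = y ∧ Z ω = i.2 ∧ S ω = i.1 ∧ X ω = x}) /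
                (∑ i ∈ fib, pr μ {ω | Y ω = y ∧ X ω = x} *
                  pr μ {ω | Z ω = i.2 ∧ S ω = i.1 ∧ X ω = x} / pr μ {ω | X ω = x})) := by
              rw [hsum_q', ← hparA y x e, div_div_eq_mul_div]
          _ ≤ ∑ i ∈ fib, pr μ {ω | Y ω = y ∧ Z ω = i.2 ∧ S ω = i.1 ∧ X ω = x} *
              Real.log (pr μ {ω | Y ω = y ∧ Z ω = i.2 ∧ S ω = i.1 ∧ X ω = x} /
                (pr μ {ω | Y ω = y ∧ X ω = x} * pr μ {ω | Z ω = i.2 ∧ S ω = i.1 ∧ X ω = x} /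
                  pr μ {ω | X ω = x})) := by
              refine log_sum_inequality fib _ _ (fun i _ => pr_nonneg μ _)
                (fun i _ => div_nonneg (mul_nonneg (pr_nonneg μ _) (pr_nonneg μ _))
                  (pr_nonneg μ _)) (fun i _ hne => ?_)
              have hpos : 0 < pr μ {ω | Y ω = y ∧ Z ω = i.2 ∧ S ω = i.1 ∧ X ω = x} :=
                lt_of_le_of_ne (pr_nonneg μ _) (Ne.symm hne)
              have h1 : 0 < pr μ {ω | Y ω = y ∧ X ω = x} :=
                lt_of_lt_of_le hpos (pr_mono μ (fun ω hh => ⟨hh.1, hh.2.2.2⟩))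
              have h2 : 0 < pr μ {ω | Z ω = i.2 ∧ S ω = i.1 ∧ X ω = x} :=
                lt_of_lt_of_le hpos (pr_mono μ (fun ω hh => ⟨hh.2.1, hh.2.2.1, hh.2.2.2⟩))
              have h3 : 0 < pr μ {ω | X ω = x} :=
                lt_of_lt_of_le hpos (pr_mono μ (fun ω hh => hh.2.2.2))
              positivity
          _ = ∑ i ∈ fib, pr μ {ω | Y ω = y ∧ Z ω = i.2 ∧ S ω = i.1 ∧ X ω = x} *
              Real.log (pr μ {ω | Y ω = y ∧ Z ω = i.2 ∧ X ω = x} * pr μ {ω | X ω = x} /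
                (pr μ {ω | Y ω = y ∧ X ω = x} * pr μ {ω | Z ω = i.2 ∧ X ω = x})) :=
              Finset.sum_congr rfl fun i _ => step2 i
      -- assemble over e and regroup
      calc (∑ e ∈ FE, pr μ {ω | Y ω = y ∧ E ω = e ∧ X ω = x} *
            Real.log (pr μ {ω | Y ω = y ∧ E ω = e ∧ X ω = x} * pr μ {ω | X ω = x} /
              (pr μ {ω | Y ω = y ∧ X ω = x} * pr μ {ω | E ω = e ∧ X ω = x})))
          ≤ ∑ e ∈ FE, ∑ i ∈ (Finset.univ ×ˢ T).filter (fun p : 𝒮 × ℝ => g p.1 + p.2 = e),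
              pr μ {ω | Y ω = y ∧ Z ω = i.2 ∧ S ω = i.1 ∧ X ω = x} *
                Real.log (pr μ {ω | Y ω = y ∧ Z ω = i.2 ∧ X ω = x} * pr μ {ω | X ω = x} /
                  (pr μ {ω | Y ω = y ∧ X ω = x} * pr μ {ω | Z ω = i.2 ∧ X ω = x})) :=
            Finset.sum_le_sum step1
        _ = ∑ i ∈ Finset.univ ×ˢ T,
              pr μ {ω | Y ω = y ∧ Z ω = i.2 ∧ S ω = i.1 ∧ X ω = x} *
                Real.log (pr μ {ω | Y ω = y ∧ Z ω = i.2 ∧ X ω = x} * pr μ {ω | X ω = x} /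
                  (pr μ {ω | Y ω = y ∧ X ω = x} * pr μ {ω | Z ω = i.2 ∧ X ω = x})) :=
            Finset.sum_fiberwise_of_maps_to
              (fun i hi => Finset.mem_image.2 ⟨i, hi, rfl⟩) _
        _ = ∑ s : 𝒮, ∑ z ∈ T,
              pr μ {ω | Y ω = y ∧ Z ω = z ∧ S ω = s ∧ X ω = x} *
                Real.log (pr μ {ω | Y ω = y ∧ Z ω = z ∧ X ω = x} * pr μ {ω | X ω = x} /
                  (pr μ {ω | Y ω = y ∧ X ω = x} * pr μ {ω | Z ω = z ∧ X ω = x})) :=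
            Finset.sum_product _ _ _
        _ = ∑ z ∈ T, ∑ s : 𝒮,
              pr μ {ω | Y ω = y ∧ Z ω = z ∧ S ω = s ∧ X ω = x} *
                Real.log (pr μ {ω | Y ω = y ∧ Z ω = z ∧ X ω = x} * pr μ {ω | X ω = x} /
                  (pr μ {ω | Y ω = y ∧ X ω = x} * pr μ {ω | Z ω = z ∧ X ω = x})) :=
            Finset.sum_comm
        _ = ∑ z ∈ T, pr μ {ω | Y ω = y ∧ Z ω = z ∧ X ω = x} *
              Real.log (pr μ {ω | Y ω = y ∧ Z ω = z ∧ X ω = x} * pr μ {ω | X ω = x} /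
                (pr μ {ω | Y ω = y ∧ X ω = x} * pr μ {ω | Z ω = z ∧ X ω = x})) := by
            refine Finset.sum_congr rfl fun z _ => ?_
            rw [← Finset.sum_mul, ← hparS y z x]
    -- convert condMI's tsums to finite sums
    have hcond_E : condMI μ Y E X = ∑ y : 𝒴, ∑ e ∈ FE, ∑ x : 𝒳,
        pr μ {ω | Y ω = y ∧ E ω = e ∧ X ω = x} *
          Real.log (pr μ {ω | Y ω = y ∧ E ω = e ∧ X ω = x} * pr μ {ω | X ω = x} /
            (pr μ {ω | Y ω = y ∧ X ω = x} * pr μ {ω | E ω = e ∧ X ω = x})) := by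
      rw [condMI, tsum_fintype]
      refine Finset.sum_congr rfl fun y _ => ?_
      rw [tsum_eq_sum (s := FE) ?_]
      · exact Finset.sum_congr rfl fun e _ => tsum_fintype _
      · intro e he
        have hzero : ∀ x : 𝒳, pr μ {ω | Y ω = y ∧ E ω = e ∧ X ω = x} = 0 := by
          intro x
          have hsub : {ω | Y ω = y ∧ E ω = e ∧ X ω = x} = (∅ : Set Ω) := by
            ext ω
            simp only [Set.mem_setOf_eq, Set.mem_empty_iff_false, iff_false, not_and]
            intro _ h2
            exact absurd (h2 ▸ hFE ω) he
          rw [hsub]; simp [pr]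
        rw [tsum_fintype]
        exact Finset.sum_eq_zero fun x _ => by rw [hzero x, zero_mul]
    have hcond_Z : condMI μ Y Z X = ∑ y : 𝒴, ∑ z ∈ T, ∑ x : 𝒳,
        pr μ {ω | Y ω = y ∧ Z ω = z ∧ X ω = x} *
          Real.log (pr μ {ω | Y ω = y ∧ Z ω = z ∧ X ω = x} * pr μ {ω | X ω = x} /
            (pr μ {ω | Y ω = y ∧ X ω = x} * pr μ {ω | Z ω = z ∧ X ω = x})) := by
      rw [condMI, tsum_fintype]
      refine Finset.sum_congr rfl fun y _ => ?_
      rw [tsum_eq_sum (s := T) ?_]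
      · exact Finset.sum_congr rfl fun z _ => tsum_fintype _
      · intro z hz
        have hzero : ∀ x : 𝒳, pr μ {ω | Y ω = y ∧ Z ω = z ∧ X ω = x} = 0 := by
          intro x
          have hsub : {ω | Y ω = y ∧ Z ω = z ∧ X ω = x} = (∅ : Set Ω) := by
            ext ω
            simp only [Set.mem_setOf_eq, Set.mem_empty_iff_false, iff_false, not_and]
            intro _ h2
            exact absurd (h2 ▸ hT ω) hz
          rw [hsub]; simp [pr]
        rw [tsum_fintype]
        exact Finset.sum_eq_zero fun x _ => by rw [hzero x, zero_mul]
    rw [hcond_E, hcond_Z]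
    refine Finset.sum_le_sum fun y _ => ?_
    calc (∑ e ∈ FE, ∑ x : 𝒳,
          pr μ {ω | Y ω = y ∧ E ω = e ∧ X ω = x} *
            Real.log (pr μ {ω | Y ω = y ∧ E ω = e ∧ X ω = x} * pr μ {ω | X ω = x} /
              (pr μ {ω | Y ω = y ∧ X ω = x} * pr μ {ω | E ω = e ∧ X ω = x})))
        = ∑ x : 𝒳, ∑ e ∈ FE,
          pr μ {ω | Y ω = y ∧ E ω = e ∧ X ω = x} *
            Real.log (pr μ {ω | Y ω = y ∧ E ω = e ∧ X ω = x} * pr μ {ω | X ω = x} /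
              (pr μ {ω | Y ω = y ∧ X ω = x} * pr μ {ω | E ω = e ∧ X ω = x})) :=
          Finset.sum_comm
      _ ≤ ∑ x : 𝒳, ∑ z ∈ T,
          pr μ {ω | Y ω = y ∧ Z ω = z ∧ X ω = x} *
            Real.log (pr μ {ω | Y ω = y ∧ Z ω = z ∧ X ω = x} * pr μ {ω | X ω = x} /
              (pr μ {ω | Y ω = y ∧ X ω = x} * pr μ {ω | Z ω = z ∧ X ω = x})) :=
          Finset.sum_le_sum fun x _ => main_yx y x
      _ = ∑ z ∈ T, ∑ x : 𝒳,
          pr μ {ω | Y ω = y ∧ Z ω = z ∧ X ω = x} *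
            Real.log (pr μ {ω | Y ω = y ∧ Z ω = z ∧ X ω = x} * pr μ {ω | X ω = x} /
              (pr μ {ω | Y ω = y ∧ X ω = x} * pr μ {ω | Z ω = z ∧ X ω = x})) :=
          Finset.sum_comm
  have hnot : ¬ CondIndep μ Y S X := fun H => absurd hMI (not_lt.2 (key H))
  exact ⟨hnot, condMI_pos μ hY hS hX hnot⟩
end

section
/- (Quantitative inequality in the proof of Theorem A.1(d)) Let X and Y be finite-valued random variables, S a random variable with values in a nonempty finite type 𝒮, Z : Ω → ℝ a random variable taking finitely many real values, and g : 𝒮 → ℝ a function; define E := g ∘ S + Z. If S ⊥ Z | X and S ⊥ Z | (X, Y), then I(Y; E | X) ≤ I(Y; S | X) + I(Y; Z | X); equivalently, I(Y; E | X) − I(Y; Z | X) ≤ I(Y; S | X). -/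
open MeasureTheory

open MarginalTransfer

namespace MTAux

section Helpers
variable {Ω : Type*} [MeasurableSpace Ω] (μ : Measure Ω)

lemma pr_nonneg (A : Set Ω) : 0 ≤ pr μ A := ENNReal.toReal_nonneg

lemma pr_mono [IsFiniteMeasure μ] {A B : Set Ω} (h : A ⊆ B) : pr μ A ≤ pr μ B :=
  ENNReal.toReal_mono (measure_ne_top μ B) (measure_mono h)

lemma pr_eq_zero_of_subset [IsFiniteMeasure μ] {A B : Set Ω} (h : A ⊆ B) (hB : pr μ B = 0) :
    pr μ A = 0 :=
  le_antisymm (hB ▸ pr_mono μ h) (pr_nonneg μ A)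

lemma pr_partition [IsFiniteMeasure μ] {β : Type*} (t : Finset β) (W : Ω → β)
    (hW : ∀ b, MeasurableSet {ω | W ω = b}) (A : Set Ω) (hA : MeasurableSet A)
    (ht : ∀ ω ∈ A, W ω ∈ t) :
    ∑ b ∈ t, pr μ (A ∩ {ω | W ω = b}) = pr μ A := by
  have hdisj : (↑t : Set β).PairwiseDisjoint (fun b => A ∩ {ω | W ω = b}) := by
    intro b _ c _ hbc
    refine Set.disjoint_left.2 ?_
    rintro ω ⟨-, hb⟩ ⟨-, hc⟩
    exact hbc (hb.symm.trans hc)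
  have hU : (⋃ b ∈ t, A ∩ {ω | W ω = b}) = A := by
    ext ω
    simp only [Set.mem_iUnion, Set.mem_inter_iff, Set.mem_setOf_eq, exists_prop]
    constructor
    · rintro ⟨b, -, hω, -⟩; exact hω
    · intro hω; exact ⟨W ω, ht ω hω, hω, rfl⟩
  have hm := measure_biUnion_finset (μ := μ) hdisj (fun b _ => hA.inter (hW b))
  rw [hU] at hm
  rw [pr, hm, ENNReal.toReal_sum (fun b _ => measure_ne_top μ _)]
  rfl

end Helpers

lemma log_sum_ineq {ι : Type*} (t : Finset ι) (a b : ι → ℝ)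
    (ha : ∀ i ∈ t, 0 ≤ a i) (hb : ∀ i ∈ t, 0 ≤ b i)
    (hab : ∀ i ∈ t, b i = 0 → a i = 0) :
    (∑ i ∈ t, a i) * Real.log ((∑ i ∈ t, a i) / (∑ i ∈ t, b i)) ≤
      ∑ i ∈ t, a i * Real.log (a i / b i) := by
  set A := ∑ i ∈ t, a i with hA
  set B := ∑ i ∈ t, b i with hB
  rcases eq_or_lt_of_le (Finset.sum_nonneg ha) with h0 | hApos
  · have hz : ∀ i ∈ t, a i = 0 :=
      fun i hi => ((Finset.sum_eq_zero_iff_of_nonneg ha).1 (hA.trans h0.symm) i hi)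
    have : A = 0 := hA.trans h0.symm
    rw [this, zero_mul]
    refine Finset.sum_nonneg (fun i hi => ?_)
    rw [hz i hi]; simp
  · replace hApos : 0 < A := hApos
    have hBpos : 0 < B := by
      obtain ⟨i, hi, hlt⟩ := Finset.exists_lt_of_sum_lt
        (show ∑ i ∈ t, (0:ℝ) < ∑ i ∈ t, a i by simpa using hApos)
      have hbi : 0 < b i := by
        rcases (hb i hi).lt_or_eq with h | h
        · exact h
        · exact absurd (hab i hi h.symm) (ne_of_gt hlt)
      exact Finset.sum_pos' hb ⟨i, hi, hbi⟩
    have key : ∀ i ∈ t,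
        a i * Real.log (A / B) + a i - b i * (A / B) ≤ a i * Real.log (a i / b i) := by
      intro i hi
      rcases (ha i hi).lt_or_eq with hai | hai
      · have hbi : 0 < b i := by
          rcases (hb i hi).lt_or_eq with h | h
          · exact h
          · exact absurd (hab i hi h.symm) (ne_of_gt hai)
        have hlog : Real.log ((A/B)/(a i/b i)) ≤ (A/B)/(a i/b i) - 1 :=
          Real.log_le_sub_one_of_pos (by positivity)
        rw [Real.log_div (by positivity) (by positivity)] at hlog
        have h2 := mul_le_mul_of_nonneg_left hlog hai.le
        have hx : a i * ((A/B)/(a i/b i)) = b i * (A/B) := by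
          field_simp
        rw [mul_sub, mul_sub, hx, mul_one] at h2
        linarith
      · rw [← hai]
        simp only [zero_mul, zero_add, zero_sub, neg_nonpos]
        exact mul_nonneg (hb i hi) (by positivity)
    calc A * Real.log (A / B)
        = ∑ i ∈ t, (a i * Real.log (A / B) + a i - b i * (A / B)) := by
          rw [Finset.sum_sub_distrib, Finset.sum_add_distrib, ← Finset.sum_mul, ← Finset.sum_mul,
            ← hA, ← hB]
          have hBA : B * (A / B) = A := by field_simp
          rw [hBA]
          ring
      _ ≤ ∑ i ∈ t, a i * Real.log (a i / b i) := Finset.sum_le_sum key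

lemma log_sum_ineq' {ι : Type*} (t : Finset ι) (a b : ι → ℝ) (pyx px : ℝ)
    (ha : ∀ i ∈ t, 0 ≤ a i) (hab : ∀ i ∈ t, a i ≤ b i)
    (haxy : ∀ i ∈ t, a i ≤ pyx) (hax : ∀ i ∈ t, a i ≤ px) :
    (∑ i ∈ t, a i) * Real.log ((∑ i ∈ t, a i) * px / (pyx * ∑ i ∈ t, b i)) ≤
      ∑ i ∈ t, a i * Real.log (a i * px / (pyx * b i)) := by
  have hb : ∀ i ∈ t, 0 ≤ b i := fun i hi => (ha i hi).trans (hab i hi)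
  have h := log_sum_ineq t a (fun i => pyx * b i / px) ha
    (fun i hi => div_nonneg (mul_nonneg ((ha i hi).trans (haxy i hi)) (hb i hi))
      ((ha i hi).trans (hax i hi)))
    (by
      intro i hi h0
      rcases div_eq_zero_iff.1 h0 with h1 | h1
      · rcases mul_eq_zero.1 h1 with h2 | h2
        · exact le_antisymm (h2 ▸ haxy i hi) (ha i hi)
        · exact le_antisymm (h2 ▸ hab i hi) (ha i hi)
      · exact le_antisymm (h1 ▸ hax i hi) (ha i hi))
  have hsum : ∑ i ∈ t, (pyx * b i / px) = pyx * (∑ i ∈ t, b i) / px := by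
    rw [Finset.mul_sum, Finset.sum_div]
  rw [hsum] at h
  calc (∑ i ∈ t, a i) * Real.log ((∑ i ∈ t, a i) * px / (pyx * ∑ i ∈ t, b i))
      = (∑ i ∈ t, a i) * Real.log ((∑ i ∈ t, a i) / (pyx * (∑ i ∈ t, b i) / px)) := by
        rw [div_div_eq_mul_div]
    _ ≤ ∑ i ∈ t, a i * Real.log (a i / (pyx * b i / px)) := h
    _ = ∑ i ∈ t, a i * Real.log (a i * px / (pyx * b i)) := by
        exact Finset.sum_congr rfl fun i _ => by rw [div_div_eq_mul_div]

/-- Core finite-sum inequality. -/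
lemma core {Ω : Type*} [MeasurableSpace Ω] (μ : Measure Ω) [IsProbabilityMeasure μ]
    {𝒳 𝒴 𝒮 : Type*} [Fintype 𝒳] [Fintype 𝒴] [Fintype 𝒮]
    (X : Ω → 𝒳) (Y : Ω → 𝒴) (S : Ω → 𝒮) (Z : Ω → ℝ)
    (mX : ∀ x, MeasurableSet {ω | X ω = x}) (mY : ∀ y, MeasurableSet {ω | Y ω = y})
    (mS : ∀ s, MeasurableSet {ω | S ω = s}) (mZ : ∀ z : ℝ, MeasurableSet {ω | Z ω = z})
    (g : 𝒮 → ℝ) (E : Ω → ℝ) (hE : E = fun ω => g (S ω) + Z ω)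
    (mE : ∀ e : ℝ, MeasurableSet {ω | E ω = e})
    (Tz Te : Finset ℝ) (hTz : ∀ ω, Z ω ∈ Tz)
    (hTe : ∀ p : 𝒮 × ℝ, p ∈ (Finset.univ : Finset 𝒮) ×ˢ Tz → g p.1 + p.2 ∈ Te)
    (hSZ_X : MarginalTransfer.CondIndep μ S Z X)
    (hSZ_XY : MarginalTransfer.CondIndep μ S Z (fun ω => (X ω, Y ω))) :
    (∑ y : 𝒴, ∑ e ∈ Te, ∑ x : 𝒳,
      pr μ {ω | Y ω = y ∧ E ω = e ∧ X ω = x} *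
        Real.log (pr μ {ω | Y ω = y ∧ E ω = e ∧ X ω = x} * pr μ {ω | X ω = x} /
          (pr μ {ω | Y ω = y ∧ X ω = x} * pr μ {ω | E ω = e ∧ X ω = x}))) ≤
    (∑ y : 𝒴, ∑ s : 𝒮, ∑ x : 𝒳,
      pr μ {ω | Y ω = y ∧ S ω = s ∧ X ω = x} *
        Real.log (pr μ {ω | Y ω = y ∧ S ω = s ∧ X ω = x} * pr μ {ω | X ω = x} /
          (pr μ {ω | Y ω = y ∧ X ω = x} * pr μ {ω | S ω = s ∧ X ω = x}))) +
    (∑ y : 𝒴, ∑ z ∈ Tz, ∑ x : 𝒳,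
      pr μ {ω | Y ω = y ∧ Z ω = z ∧ X ω = x} *
        Real.log (pr μ {ω | Y ω = y ∧ Z ω = z ∧ X ω = x} * pr μ {ω | X ω = x} /
          (pr μ {ω | Y ω = y ∧ X ω = x} * pr μ {ω | Z ω = z ∧ X ω = x}))) := by
  classical
  have prnn := pr_nonneg μ
  -- measurability of composite sets
  have mYSZX : ∀ (y : 𝒴) (s : 𝒮) (z : ℝ) (x : 𝒳),
      MeasurableSet {ω | Y ω = y ∧ S ω = s ∧ Z ω = z ∧ X ω = x} :=
    fun y s z x => (mY y).inter ((mS s).inter ((mZ z).inter (mX x)))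
  have mYSX : ∀ (y : 𝒴) (s : 𝒮) (x : 𝒳),
      MeasurableSet {ω | Y ω = y ∧ S ω = s ∧ X ω = x} :=
    fun y s x => (mY y).inter ((mS s).inter (mX x))
  have mYZX : ∀ (y : 𝒴) (z : ℝ) (x : 𝒳),
      MeasurableSet {ω | Y ω = y ∧ Z ω = z ∧ X ω = x} :=
    fun y z x => (mY y).inter ((mZ z).inter (mX x))
  have mYEX : ∀ (y : 𝒴) (e : ℝ) (x : 𝒳),
      MeasurableSet {ω | Y ω = y ∧ E ω = e ∧ X ω = x} :=
    fun y e x => (mY y).inter ((mE e).inter (mX x))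
  have mEX : ∀ (e : ℝ) (x : 𝒳), MeasurableSet {ω | E ω = e ∧ X ω = x} :=
    fun e x => (mE e).inter (mX x)
  have mSZ : ∀ p : 𝒮 × ℝ, MeasurableSet {ω | (S ω, Z ω) = p} := by
    intro p
    have h : {ω | (S ω, Z ω) = p} = {ω | S ω = p.1} ∩ {ω | Z ω = p.2} := by
      ext ω; simp [Prod.ext_iff]
    rw [h]; exact (mS p.1).inter (mZ p.2)
  -- marginalization identities
  have M3 : ∀ (y : 𝒴) (s : 𝒮) (x : 𝒳),
      ∑ z ∈ Tz, pr μ {ω | Y ω = y ∧ S ω = s ∧ Z ω = z ∧ X ω = x} =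
        pr μ {ω | Y ω = y ∧ S ω = s ∧ X ω = x} := by
    intro y s x
    have h := pr_partition μ Tz Z mZ {ω | Y ω = y ∧ S ω = s ∧ X ω = x} (mYSX y s x)
      (fun ω _ => hTz ω)
    rw [← h]
    refine Finset.sum_congr rfl fun z _ => ?_
    congr 1
    ext ω
    simp only [Set.mem_inter_iff, Set.mem_setOf_eq]
    tauto
  have M4 : ∀ (y : 𝒴) (z : ℝ) (x : 𝒳),
      ∑ s : 𝒮, pr μ {ω | Y ω = y ∧ S ω = s ∧ Z ω = z ∧ X ω = x} =
        pr μ {ω | Y ω = y ∧ Z ω = z ∧ X ω = x} := by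
    intro y z x
    have h := pr_partition μ Finset.univ S mS {ω | Y ω = y ∧ Z ω = z ∧ X ω = x} (mYZX y z x)
      (fun ω _ => Finset.mem_univ _)
    rw [← h]
    refine Finset.sum_congr rfl fun s _ => ?_
    congr 1
    ext ω
    simp only [Set.mem_inter_iff, Set.mem_setOf_eq]
    tauto
  have M1 : ∀ (y : 𝒴) (e : ℝ) (x : 𝒳),
      pr μ {ω | Y ω = y ∧ E ω = e ∧ X ω = x} =
        ∑ p ∈ (Finset.univ ×ˢ Tz).filter (fun p : 𝒮 × ℝ => g p.1 + p.2 = e),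
          pr μ {ω | Y ω = y ∧ S ω = p.1 ∧ Z ω = p.2 ∧ X ω = x} := by
    intro y e x
    have h := pr_partition μ
      ((Finset.univ ×ˢ Tz).filter (fun p : 𝒮 × ℝ => g p.1 + p.2 = e))
      (fun ω => (S ω, Z ω)) mSZ {ω | Y ω = y ∧ E ω = e ∧ X ω = x} (mYEX y e x)
      (by
        rintro ω ⟨-, hEω, -⟩
        refine Finset.mem_filter.2 ⟨Finset.mem_product.2 ⟨Finset.mem_univ _, hTz ω⟩, ?_⟩
        rw [← hEω, hE])
    rw [← h]
    refine Finset.sum_congr rfl fun p hp => ?_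
    obtain ⟨-, hpe⟩ := Finset.mem_filter.1 hp
    congr 1
    ext ω
    simp only [Set.mem_inter_iff, Set.mem_setOf_eq, Prod.ext_iff]
    constructor
    · rintro ⟨⟨h1, h2, h3⟩, hs, hz⟩; exact ⟨h1, hs, hz, h3⟩
    · rintro ⟨h1, hs, hz, h3⟩
      refine ⟨⟨h1, ?_, h3⟩, hs, hz⟩
      rw [hE]; simp only; rw [hs, hz, hpe]
  have M2 : ∀ (e : ℝ) (x : 𝒳),
      pr μ {ω | E ω = e ∧ X ω = x} =
        ∑ p ∈ (Finset.univ ×ˢ Tz).filter (fun p : 𝒮 × ℝ => g p.1 + p.2 = e),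
          pr μ {ω | S ω = p.1 ∧ Z ω = p.2 ∧ X ω = x} := by
    intro e x
    have h := pr_partition μ
      ((Finset.univ ×ˢ Tz).filter (fun p : 𝒮 × ℝ => g p.1 + p.2 = e))
      (fun ω => (S ω, Z ω)) mSZ {ω | E ω = e ∧ X ω = x} (mEX e x)
      (by
        rintro ω ⟨hEω, -⟩
        refine Finset.mem_filter.2 ⟨Finset.mem_product.2 ⟨Finset.mem_univ _, hTz ω⟩, ?_⟩
        rw [← hEω, hE])
    rw [← h]
    refine Finset.sum_congr rfl fun p hp => ?_
    obtain ⟨-, hpe⟩ := Finset.mem_filter.1 hp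
    congr 1
    ext ω
    simp only [Set.mem_inter_iff, Set.mem_setOf_eq, Prod.ext_iff]
    constructor
    · rintro ⟨⟨h2, h3⟩, hs, hz⟩; exact ⟨hs, hz, h3⟩
    · rintro ⟨hs, hz, h3⟩
      refine ⟨⟨?_, h3⟩, hs, hz⟩
      rw [hE]; simp only; rw [hs, hz, hpe]
  -- Step A: data processing via log-sum inequality, per (y, x)
  have stepA : ∀ (y : 𝒴) (x : 𝒳),
      (∑ e ∈ Te,
        pr μ {ω | Y ω = y ∧ E ω = e ∧ X ω = x} *
          Real.log (pr μ {ω | Y ω = y ∧ E ω = e ∧ X ω = x} * pr μ {ω | X ω = x} /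
            (pr μ {ω | Y ω = y ∧ X ω = x} * pr μ {ω | E ω = e ∧ X ω = x}))) ≤
      ∑ s : 𝒮, ∑ z ∈ Tz,
        pr μ {ω | Y ω = y ∧ S ω = s ∧ Z ω = z ∧ X ω = x} *
          Real.log (pr μ {ω | Y ω = y ∧ S ω = s ∧ Z ω = z ∧ X ω = x} * pr μ {ω | X ω = x} /
            (pr μ {ω | Y ω = y ∧ X ω = x} *
              pr μ {ω | S ω = s ∧ Z ω = z ∧ X ω = x})) := by
    intro y x
    have hps : (∑ p ∈ Finset.univ ×ˢ Tz,
        pr μ {ω | Y ω = y ∧ S ω = p.1 ∧ Z ω = p.2 ∧ X ω = x} *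
          Real.log (pr μ {ω | Y ω = y ∧ S ω = p.1 ∧ Z ω = p.2 ∧ X ω = x} * pr μ {ω | X ω = x} /
            (pr μ {ω | Y ω = y ∧ X ω = x} *
              pr μ {ω | S ω = p.1 ∧ Z ω = p.2 ∧ X ω = x}))) =
        ∑ s : 𝒮, ∑ z ∈ Tz,
        pr μ {ω | Y ω = y ∧ S ω = s ∧ Z ω = z ∧ X ω = x} *
          Real.log (pr μ {ω | Y ω = y ∧ S ω = s ∧ Z ω = z ∧ X ω = x} * pr μ {ω | X ω = x} /
            (pr μ {ω | Y ω = y ∧ X ω = x} *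
              pr μ {ω | S ω = s ∧ Z ω = z ∧ X ω = x})) := Finset.sum_product _ _ _
    rw [← hps, ← Finset.sum_fiberwise_of_maps_to hTe]
    refine Finset.sum_le_sum fun e _ => ?_
    rw [M1 y e x, M2 e x]
    exact log_sum_ineq' _ _ _ _ _ (fun p _ => prnn _)
      (fun p _ => pr_mono μ (fun ω hω => ⟨hω.2.1, hω.2.2.1, hω.2.2.2⟩))
      (fun p _ => pr_mono μ (fun ω hω => ⟨hω.1, hω.2.2.2⟩))
      (fun p _ => pr_mono μ (fun ω hω => hω.2.2.2))
  -- Step B: termwise splitting via the two conditional independences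
  have split : ∀ (y : 𝒴) (s : 𝒮) (z : ℝ) (x : 𝒳),
      pr μ {ω | Y ω = y ∧ S ω = s ∧ Z ω = z ∧ X ω = x} *
        Real.log (pr μ {ω | Y ω = y ∧ S ω = s ∧ Z ω = z ∧ X ω = x} * pr μ {ω | X ω = x} /
          (pr μ {ω | Y ω = y ∧ X ω = x} * pr μ {ω | S ω = s ∧ Z ω = z ∧ X ω = x})) =
      pr μ {ω | Y ω = y ∧ S ω = s ∧ Z ω = z ∧ X ω = x} *
        Real.log (pr μ {ω | Y ω = y ∧ S ω = s ∧ X ω = x} * pr μ {ω | X ω = x} /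
          (pr μ {ω | Y ω = y ∧ X ω = x} * pr μ {ω | S ω = s ∧ X ω = x})) +
      pr μ {ω | Y ω = y ∧ S ω = s ∧ Z ω = z ∧ X ω = x} *
        Real.log (pr μ {ω | Y ω = y ∧ Z ω = z ∧ X ω = x} * pr μ {ω | X ω = x} /
          (pr μ {ω | Y ω = y ∧ X ω = x} * pr μ {ω | Z ω = z ∧ X ω = x})) := by
    intro y s z x
    rcases (prnn {ω | Y ω = y ∧ S ω = s ∧ Z ω = z ∧ X ω = x}).lt_or_eq with hpos | h0
    swap
    · rw [← h0]; ring
    have hpysx : 0 < pr μ {ω | Y ω = y ∧ S ω = s ∧ X ω = x} :=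
      lt_of_lt_of_le hpos (pr_mono μ (fun ω hω => ⟨hω.1, hω.2.1, hω.2.2.2⟩))
    have hpyzx : 0 < pr μ {ω | Y ω = y ∧ Z ω = z ∧ X ω = x} :=
      lt_of_lt_of_le hpos (pr_mono μ (fun ω hω => ⟨hω.1, hω.2.2.1, hω.2.2.2⟩))
    have hpyx : 0 < pr μ {ω | Y ω = y ∧ X ω = x} :=
      lt_of_lt_of_le hpos (pr_mono μ (fun ω hω => ⟨hω.1, hω.2.2.2⟩))
    have hpsx : 0 < pr μ {ω | S ω = s ∧ X ω = x} :=
      lt_of_lt_of_le hpos (pr_mono μ (fun ω hω => ⟨hω.2.1, hω.2.2.2⟩))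
    have hpzx : 0 < pr μ {ω | Z ω = z ∧ X ω = x} :=
      lt_of_lt_of_le hpos (pr_mono μ (fun ω hω => ⟨hω.2.2.1, hω.2.2.2⟩))
    have hpszx : 0 < pr μ {ω | S ω = s ∧ Z ω = z ∧ X ω = x} :=
      lt_of_lt_of_le hpos (pr_mono μ (fun ω hω => ⟨hω.2.1, hω.2.2.1, hω.2.2.2⟩))
    have hpx : 0 < pr μ {ω | X ω = x} :=
      lt_of_lt_of_le hpos (pr_mono μ (fun ω hω => hω.2.2.2))
    have e1 := hSZ_XY s z (x, y)
    have r1 : {ω | S ω = s ∧ Z ω = z ∧ (X ω, Y ω) = (x, y)} =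
        {ω | Y ω = y ∧ S ω = s ∧ Z ω = z ∧ X ω = x} := by
      ext ω; simp only [Set.mem_setOf_eq, Prod.mk.injEq]; tauto
    have r2 : {ω | (X ω, Y ω) = (x, y)} = {ω | Y ω = y ∧ X ω = x} := by
      ext ω; simp only [Set.mem_setOf_eq, Prod.mk.injEq]; tauto
    have r3 : {ω | S ω = s ∧ (X ω, Y ω) = (x, y)} = {ω | Y ω = y ∧ S ω = s ∧ X ω = x} := by
      ext ω; simp only [Set.mem_setOf_eq, Prod.mk.injEq]; tauto
    have r4 : {ω | Z ω = z ∧ (X ω, Y ω) = (x, y)} = {ω | Y ω = y ∧ Z ω = z ∧ X ω = x} := by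
      ext ω; simp only [Set.mem_setOf_eq, Prod.mk.injEq]; tauto
    rw [r1, r2, r3, r4] at e1
    have e2 := hSZ_X s z x
    have hargeq : pr μ {ω | Y ω = y ∧ S ω = s ∧ Z ω = z ∧ X ω = x} * pr μ {ω | X ω = x} /
          (pr μ {ω | Y ω = y ∧ X ω = x} * pr μ {ω | S ω = s ∧ Z ω = z ∧ X ω = x}) =
        (pr μ {ω | Y ω = y ∧ S ω = s ∧ X ω = x} * pr μ {ω | X ω = x} /
          (pr μ {ω | Y ω = y ∧ X ω = x} * pr μ {ω | S ω = s ∧ X ω = x})) *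
        (pr μ {ω | Y ω = y ∧ Z ω = z ∧ X ω = x} * pr μ {ω | X ω = x} /
          (pr μ {ω | Y ω = y ∧ X ω = x} * pr μ {ω | Z ω = z ∧ X ω = x})) := by
      rw [div_mul_div_comm, div_eq_div_iff (mul_pos hpyx hpszx).ne'
        (mul_pos (mul_pos hpyx hpsx) (mul_pos hpyx hpzx)).ne']
      linear_combination (pr μ {ω | X ω = x} ^ 2 * pr μ {ω | Y ω = y ∧ X ω = x} *
          pr μ {ω | S ω = s ∧ Z ω = z ∧ X ω = x}) * e1 +
        (pr μ {ω | Y ω = y ∧ S ω = s ∧ Z ω = z ∧ X ω = x} * pr μ {ω | X ω = x} *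
          pr μ {ω | Y ω = y ∧ X ω = x} ^ 2) * e2.symm
    rw [hargeq, Real.log_mul
      (ne_of_gt (div_pos (mul_pos hpysx hpx) (mul_pos hpyx hpsx)))
      (ne_of_gt (div_pos (mul_pos hpyzx hpx) (mul_pos hpyx hpzx))), mul_add]
  -- assemble
  calc (∑ y : 𝒴, ∑ e ∈ Te, ∑ x : 𝒳,
      pr μ {ω | Y ω = y ∧ E ω = e ∧ X ω = x} *
        Real.log (pr μ {ω | Y ω = y ∧ E ω = e ∧ X ω = x} * pr μ {ω | X ω = x} /
          (pr μ {ω | Y ω = y ∧ X ω = x} * pr μ {ω | E ω = e ∧ X ω = x})))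
      = ∑ y : 𝒴, ∑ x : 𝒳, ∑ e ∈ Te,
        pr μ {ω | Y ω = y ∧ E ω = e ∧ X ω = x} *
          Real.log (pr μ {ω | Y ω = y ∧ E ω = e ∧ X ω = x} * pr μ {ω | X ω = x} /
            (pr μ {ω | Y ω = y ∧ X ω = x} * pr μ {ω | E ω = e ∧ X ω = x})) := by
        exact Finset.sum_congr rfl fun y _ => Finset.sum_comm
    _ ≤ ∑ y : 𝒴, ∑ x : 𝒳, ∑ s : 𝒮, ∑ z ∈ Tz,
        pr μ {ω | Y ω = y ∧ S ω = s ∧ Z ω = z ∧ X ω = x} *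
          Real.log (pr μ {ω | Y ω = y ∧ S ω = s ∧ Z ω = z ∧ X ω = x} * pr μ {ω | X ω = x} /
            (pr μ {ω | Y ω = y ∧ X ω = x} * pr μ {ω | S ω = s ∧ Z ω = z ∧ X ω = x})) := by
        exact Finset.sum_le_sum fun y _ => Finset.sum_le_sum fun x _ => stepA y x
    _ = ∑ y : 𝒴, ∑ s : 𝒮, ∑ z ∈ Tz, ∑ x : 𝒳,
        pr μ {ω | Y ω = y ∧ S ω = s ∧ Z ω = z ∧ X ω = x} *
          Real.log (pr μ {ω | Y ω = y ∧ S ω = s ∧ Z ω = z ∧ X ω = x} * pr μ {ω | X ω = x} /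
            (pr μ {ω | Y ω = y ∧ X ω = x} * pr μ {ω | S ω = s ∧ Z ω = z ∧ X ω = x})) := by
        refine Finset.sum_congr rfl fun y _ => ?_
        rw [Finset.sum_comm]
        exact Finset.sum_congr rfl fun s _ => Finset.sum_comm
    _ = (∑ y : 𝒴, ∑ s : 𝒮, ∑ z ∈ Tz, ∑ x : 𝒳,
          pr μ {ω | Y ω = y ∧ S ω = s ∧ Z ω = z ∧ X ω = x} *
            Real.log (pr μ {ω | Y ω = y ∧ S ω = s ∧ X ω = x} * pr μ {ω | X ω = x} /
              (pr μ {ω | Y ω = y ∧ X ω = x} * pr μ {ω | S ω = s ∧ X ω = x}))) +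
        (∑ y : 𝒴, ∑ s : 𝒮, ∑ z ∈ Tz, ∑ x : 𝒳,
          pr μ {ω | Y ω = y ∧ S ω = s ∧ Z ω = z ∧ X ω = x} *
            Real.log (pr μ {ω | Y ω = y ∧ Z ω = z ∧ X ω = x} * pr μ {ω | X ω = x} /
              (pr μ {ω | Y ω = y ∧ X ω = x} * pr μ {ω | Z ω = z ∧ X ω = x}))) := by
        simp only [split, Finset.sum_add_distrib]
    _ = _ := by
        congr 1
        · refine Finset.sum_congr rfl fun y _ => Finset.sum_congr rfl fun s _ => ?_
          rw [Finset.sum_comm]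
          refine Finset.sum_congr rfl fun x _ => ?_
          rw [← Finset.sum_mul, M3 y s x]
        · refine Finset.sum_congr rfl fun y _ => ?_
          rw [Finset.sum_comm]
          refine Finset.sum_congr rfl fun z _ => ?_
          rw [Finset.sum_comm]
          refine Finset.sum_congr rfl fun x _ => ?_
          rw [← Finset.sum_mul, M4 y z x]


end MTAux

/-- **Quantitative inequality in the proof of Theorem A.1(d)**.
Let `X, Y` be finite-valued random variables, `S` a random variable with values
in a nonempty finite type, `Z : Ω → ℝ` a random variable taking finitely many
real values, and `E := g ∘ S + Z`.  If `S ⟂ Z ∣ X` and `S ⟂ Z ∣ (X, Y)`, then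
`I(Y; E ∣ X) ≤ I(Y; S ∣ X) + I(Y; Z ∣ X)`. -/
theorem quantitative_inequality_A_1_d
    {Ω : Type*} [MeasurableSpace Ω] (μ : Measure Ω) [IsProbabilityMeasure μ]
    {𝒳 𝒴 𝒮 : Type*}
    [Fintype 𝒳] [Nonempty 𝒳] [MeasurableSpace 𝒳] [MeasurableSingletonClass 𝒳]
    [Fintype 𝒴] [Nonempty 𝒴] [MeasurableSpace 𝒴] [MeasurableSingletonClass 𝒴]
    [Fintype 𝒮] [Nonempty 𝒮] [MeasurableSpace 𝒮] [MeasurableSingletonClass 𝒮]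
    (X : Ω → 𝒳) (Y : Ω → 𝒴) (S : Ω → 𝒮) (Z : Ω → ℝ)
    (hX : Measurable X) (hY : Measurable Y) (hS : Measurable S) (hZ : Measurable Z)
    (hZfin : (Set.range Z).Finite)
    (g : 𝒮 → ℝ) (E : Ω → ℝ) (hE : E = fun ω => g (S ω) + Z ω)
    (hSZ_X : CondIndep μ S Z X)
    (hSZ_XY : CondIndep μ S Z (fun ω => (X ω, Y ω))) :
    condMI μ Y E X ≤ condMI μ Y S X + condMI μ Y Z X := by
  classical
  set Tz : Finset ℝ := hZfin.toFinset with hTzdef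
  have hTzm : ∀ ω, Z ω ∈ Tz := fun ω => hZfin.mem_toFinset.2 ⟨ω, rfl⟩
  set Te : Finset ℝ := Finset.image (fun p : 𝒮 × ℝ => g p.1 + p.2) (Finset.univ ×ˢ Tz)
    with hTedef
  have hTe : ∀ p ∈ (Finset.univ : Finset 𝒮) ×ˢ Tz, g p.1 + p.2 ∈ Te :=
    fun p hp => Finset.mem_image.2 ⟨p, hp, rfl⟩
  have hTem : ∀ ω, E ω ∈ Te := by
    intro ω; rw [hE]
    exact hTe (S ω, Z ω) (Finset.mem_product.2 ⟨Finset.mem_univ _, hTzm ω⟩)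
  have hEm : Measurable E := by
    rw [hE]; exact ((measurable_of_countable g).comp hS).add hZ
  have mX : ∀ x, MeasurableSet {ω | X ω = x} := fun x => hX (measurableSet_singleton x)
  have mY : ∀ y, MeasurableSet {ω | Y ω = y} := fun y => hY (measurableSet_singleton y)
  have mS : ∀ s, MeasurableSet {ω | S ω = s} := fun s => hS (measurableSet_singleton s)
  have mZ : ∀ z : ℝ, MeasurableSet {ω | Z ω = z} := fun z => hZ (measurableSet_singleton z)
  have mE : ∀ e : ℝ, MeasurableSet {ω | E ω = e} := fun e => hEm (measurableSet_singleton e)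
  have h1 : condMI μ Y S X = ∑ y : 𝒴, ∑ s : 𝒮, ∑ x : 𝒳,
      pr μ {ω | Y ω = y ∧ S ω = s ∧ X ω = x} *
        Real.log (pr μ {ω | Y ω = y ∧ S ω = s ∧ X ω = x} * pr μ {ω | X ω = x} /
          (pr μ {ω | Y ω = y ∧ X ω = x} * pr μ {ω | S ω = s ∧ X ω = x})) := by
    rw [condMI, tsum_fintype]
    refine Finset.sum_congr rfl fun y _ => ?_
    rw [tsum_fintype]
    exact Finset.sum_congr rfl fun s _ => tsum_fintype _
  have h2 : condMI μ Y Z X = ∑ y : 𝒴, ∑ z ∈ Tz, ∑ x : 𝒳,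
      pr μ {ω | Y ω = y ∧ Z ω = z ∧ X ω = x} *
        Real.log (pr μ {ω | Y ω = y ∧ Z ω = z ∧ X ω = x} * pr μ {ω | X ω = x} /
          (pr μ {ω | Y ω = y ∧ X ω = x} * pr μ {ω | Z ω = z ∧ X ω = x})) := by
    rw [condMI, tsum_fintype]
    refine Finset.sum_congr rfl fun y _ => ?_
    rw [tsum_eq_sum (s := Tz) ?_]
    · exact Finset.sum_congr rfl fun z _ => tsum_fintype _
    · intro z hz
      have hz0 : ∀ x : 𝒳, pr μ {ω | Y ω = y ∧ Z ω = z ∧ X ω = x} = 0 := by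
        intro x
        have hempty : {ω | Y ω = y ∧ Z ω = z ∧ X ω = x} = ∅ := by
          ext ω
          simp only [Set.mem_setOf_eq, Set.mem_empty_iff_false, iff_false, not_and]
          intro _ h _
          exact hz (h ▸ hTzm ω)
        rw [hempty, pr, measure_empty, ENNReal.toReal_zero]
      simp only [hz0, zero_mul, tsum_zero]
  have h3 : condMI μ Y E X = ∑ y : 𝒴, ∑ e ∈ Te, ∑ x : 𝒳,
      pr μ {ω | Y ω = y ∧ E ω = e ∧ X ω = x} *
        Real.log (pr μ {ω | Y ω = y ∧ E ω = e ∧ X ω = x} * pr μ {ω | X ω = x} /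
          (pr μ {ω | Y ω = y ∧ X ω = x} * pr μ {ω | E ω = e ∧ X ω = x})) := by
    rw [condMI, tsum_fintype]
    refine Finset.sum_congr rfl fun y _ => ?_
    rw [tsum_eq_sum (s := Te) ?_]
    · exact Finset.sum_congr rfl fun e _ => tsum_fintype _
    · intro e he
      have he0 : ∀ x : 𝒳, pr μ {ω | Y ω = y ∧ E ω = e ∧ X ω = x} = 0 := by
        intro x
        have hempty : {ω | Y ω = y ∧ E ω = e ∧ X ω = x} = ∅ := by
          ext ω
          simp only [Set.mem_setOf_eq, Set.mem_empty_iff_false, iff_false, not_and]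
          intro _ h _
          exact he (h ▸ hTem ω)
        rw [hempty, pr, measure_empty, ENNReal.toReal_zero]
      simp only [he0, zero_mul, tsum_zero]
  rw [h1, h2, h3]
  exact MTAux.core μ X Y S Z mX mY mS mZ g E hE mE Tz Te hTzm hTe hSZ_X hSZ_XY
end

section
/- (Mutual-information subadditivity under sums, Equation (12) of the paper) Let A and B be random variables taking finitely many real values and let C be a finite-valued random variable. If A ⊥ B and A ⊥ B | C, then I(A + B; C) ≤ I(A; C) + I(B; C). -/
open MeasureTheory

open MarginalTransfer

section AuxLemmas

open MeasureTheory Finset MarginalTransfer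

variable {Ω : Type*} [MeasurableSpace Ω]

lemma pr_nonneg' (μ : Measure Ω) (s : Set Ω) : 0 ≤ pr μ s := ENNReal.toReal_nonneg

lemma pr_mono' (μ : Measure Ω) [IsFiniteMeasure μ] {s t : Set Ω} (h : s ⊆ t) :
    pr μ s ≤ pr μ t := ENNReal.toReal_mono (measure_ne_top μ t) (measure_mono h)

lemma pr_empty' (μ : Measure Ω) : pr μ (∅ : Set Ω) = 0 := by simp [pr]

lemma pr_univ' (μ : Measure Ω) [IsProbabilityMeasure μ] :
    pr μ (Set.univ : Set Ω) = 1 := by simp [pr]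

lemma measurableSet_eq_of {α : Type*} [MeasurableSpace α] [MeasurableSingletonClass α]
    {f : Ω → α} (hf : Measurable f) (a : α) : MeasurableSet {ω | f ω = a} :=
  hf (measurableSet_singleton a)

lemma pr_fiber_sum {α : Type*} [DecidableEq α] (μ : Measure Ω) [IsFiniteMeasure μ]
    (f : Ω → α) (S : Finset α) (hS : ∀ ω, f ω ∈ S) (T : Set Ω)
    (hm : ∀ a, MeasurableSet (T ∩ {ω | f ω = a})) :
    pr μ T = ∑ a ∈ S, pr μ (T ∩ {ω | f ω = a}) := by
  have hT : T = ⋃ a ∈ S, (T ∩ {ω | f ω = a}) := by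
    ext ω
    simp only [Set.mem_iUnion, Set.mem_inter_iff, Set.mem_setOf_eq]
    constructor
    · intro h; exact ⟨f ω, hS ω, h, rfl⟩
    · rintro ⟨a, _, h, _⟩; exact h
  have hdisj : (↑S : Set α).PairwiseDisjoint (fun a => T ∩ {ω | f ω = a}) := by
    intro a _ b _ hab
    refine Set.disjoint_left.2 ?_
    rintro ω ⟨_, ha⟩ ⟨_, hb⟩
    exact hab (by rw [← ha, ← hb])
  unfold pr
  conv_lhs => rw [hT]
  rw [measure_biUnion_finset hdisj (fun a _ => hm a),
    ENNReal.toReal_sum (fun a _ => measure_ne_top μ _)]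

lemma log_sum_ineq {ι : Type*} (s : Finset ι) (x y : ι → ℝ)
    (hx : ∀ i ∈ s, 0 ≤ x i) (hy : ∀ i ∈ s, 0 ≤ y i)
    (hxy : ∀ i ∈ s, y i = 0 → x i = 0) :
    (∑ i ∈ s, x i) * Real.log ((∑ i ∈ s, x i) / (∑ i ∈ s, y i)) ≤
      ∑ i ∈ s, x i * Real.log (x i / y i) := by
  set X := ∑ i ∈ s, x i with hX
  set Y := ∑ i ∈ s, y i with hY
  have hXnn : (0:ℝ) ≤ X := by rw [hX]; exact Finset.sum_nonneg hx
  rcases eq_or_lt_of_le hXnn with hX0 | hX0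
  · have hx0 : ∀ i ∈ s, x i = 0 := by
      intro i hi
      exact (Finset.sum_eq_zero_iff_of_nonneg hx).1 (by rw [← hX, ← hX0]) i hi
    have h1 : X * Real.log (X/Y) = 0 := by rw [← hX0]; ring
    have h2 : ∑ i ∈ s, x i * Real.log (x i / y i) = 0 :=
      Finset.sum_eq_zero (fun i hi => by rw [hx0 i hi]; ring)
    rw [h1, h2]
  · have hY0 : 0 < Y := by
      have hYnn : (0:ℝ) ≤ Y := by rw [hY]; exact Finset.sum_nonneg hy
      rcases eq_or_lt_of_le hYnn with h | h
      · exfalso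
        have hy0 : ∀ i ∈ s, y i = 0 := by
          intro i hi
          exact (Finset.sum_eq_zero_iff_of_nonneg hy).1 (by rw [← hY, ← h]) i hi
        have hXz : X = 0 := by
          rw [hX]; exact Finset.sum_eq_zero (fun i hi => hxy i hi (hy0 i hi))
        linarith
      · exact h
    have key : ∀ i ∈ s, x i - y i * (X / Y) ≤
        x i * Real.log (x i / y i) - x i * Real.log (X / Y) := by
      intro i hi
      rcases eq_or_lt_of_le (hx i hi) with hxi | hxi
      · have h0 : 0 ≤ y i * (X / Y) := mul_nonneg (hy i hi) (div_nonneg hX0.le hY0.le)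
        rw [← hxi]
        nlinarith [h0]
      · have hyi : 0 < y i := by
          rcases eq_or_lt_of_le (hy i hi) with h | h
          · exfalso; have := hxy i hi h.symm; linarith
          · exact h
        have hlog : Real.log (y i * X / (x i * Y)) ≤ y i * X / (x i * Y) - 1 :=
          Real.log_le_sub_one_of_pos (by positivity)
        have hsplit : Real.log (x i / y i) - Real.log (X / Y) =
            - Real.log (y i * X / (x i * Y)) := by
          rw [Real.log_div hxi.ne' hyi.ne', Real.log_div hX0.ne' hY0.ne',
            Real.log_div (by positivity : (0:ℝ) < y i * X).ne'
              (by positivity : (0:ℝ) < x i * Y).ne',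
            Real.log_mul hyi.ne' hX0.ne', Real.log_mul hxi.ne' hY0.ne']
          ring
        have hstep : 1 - y i * X / (x i * Y) ≤
            Real.log (x i / y i) - Real.log (X / Y) := by
          rw [hsplit]; linarith
        have hmul := mul_le_mul_of_nonneg_left hstep hxi.le
        have hcalc : x i * (1 - y i * X / (x i * Y)) = x i - y i * (X / Y) := by
          field_simp
        calc x i - y i * (X / Y) = x i * (1 - y i * X / (x i * Y)) := hcalc.symm
          _ ≤ x i * (Real.log (x i / y i) - Real.log (X / Y)) := hmul
          _ = x i * Real.log (x i / y i) - x i * Real.log (X / Y) := by ring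
    have hsum := Finset.sum_le_sum key
    have hzero : ∑ i ∈ s, (x i - y i * (X/Y)) = 0 := by
      rw [Finset.sum_sub_distrib, ← Finset.sum_mul, ← hX, ← hY]
      field_simp
      ring
    rw [hzero] at hsum
    rw [Finset.sum_sub_distrib, ← Finset.sum_mul, ← hX] at hsum
    linarith

lemma mutualInfo_eq_sum {α 𝒞 : Type*} [Fintype 𝒞] (μ : Measure Ω) [IsProbabilityMeasure μ]
    (U : Ω → α) (C : Ω → 𝒞) (S : Finset α) (hS : ∀ ω, U ω ∈ S) :
    mutualInfo μ U C = ∑ u ∈ S, ∑ c : 𝒞,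
      pr μ {ω | U ω = u ∧ C ω = c} *
        Real.log (pr μ {ω | U ω = u ∧ C ω = c} /
          (pr μ {ω | U ω = u} * pr μ {ω | C ω = c})) := by
  have h1 : ∀ u : α, (∑' v : 𝒞, ∑' w : Unit,
      pr μ {ω | U ω = u ∧ C ω = v ∧ (fun _ => (() : Unit)) ω = w} *
        Real.log (pr μ {ω | U ω = u ∧ C ω = v ∧ (fun _ => (() : Unit)) ω = w} *
            pr μ {ω | (fun _ : Ω => (() : Unit)) ω = w} /
          (pr μ {ω | U ω = u ∧ (fun _ => (() : Unit)) ω = w} *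
            pr μ {ω | C ω = v ∧ (fun _ => (() : Unit)) ω = w}))) =
      ∑ c : 𝒞, pr μ {ω | U ω = u ∧ C ω = c} *
        Real.log (pr μ {ω | U ω = u ∧ C ω = c} /
          (pr μ {ω | U ω = u} * pr μ {ω | C ω = c})) := by
    intro u
    rw [tsum_fintype]
    refine Finset.sum_congr rfl (fun c _ => ?_)
    rw [tsum_eq_single () (fun b hb => (hb (Subsingleton.elim b ())).elim)]
    have e1 : {ω | U ω = u ∧ C ω = c ∧ (fun _ => (() : Unit)) ω = ()} =
        {ω | U ω = u ∧ C ω = c} := by ext ω; simp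
    have e2 : {ω | U ω = u ∧ (fun _ => (() : Unit)) ω = ()} = {ω | U ω = u} := by
      ext ω; simp
    have e3 : {ω | C ω = c ∧ (fun _ => (() : Unit)) ω = ()} = {ω | C ω = c} := by
      ext ω; simp
    have e4 : {ω : Ω | (fun _ : Ω => (() : Unit)) ω = ()} = Set.univ := by
      ext ω; simp
    rw [e1, e2, e3, e4, pr_univ', mul_one]
  rw [mutualInfo, condMI, tsum_congr h1]
  refine tsum_eq_sum (fun u hu => ?_)
  have he : ∀ c : 𝒞, pr μ {ω | U ω = u ∧ C ω = c} = 0 := by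
    intro c
    have hemp : {ω | U ω = u ∧ C ω = c} = (∅ : Set Ω) := by
      ext ω
      simp only [Set.mem_setOf_eq, Set.mem_empty_iff_false, iff_false, not_and]
      intro h
      exact absurd (h ▸ hS ω) hu
    rw [hemp]; simp [pr]
  exact Finset.sum_eq_zero (fun c _ => by rw [he c]; ring)

lemma indep_pr {α β : Type*} (μ : Measure Ω) [IsProbabilityMeasure μ]
    {U : Ω → α} {V : Ω → β} (h : Indep μ U V) (u : α) (v : β) :
    pr μ {ω | U ω = u ∧ V ω = v} = pr μ {ω | U ω = u} * pr μ {ω | V ω = v} := by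
  have hh := h u v ()
  have e1 : {ω | U ω = u ∧ V ω = v ∧ (fun _ => (() : Unit)) ω = ()} =
      {ω | U ω = u ∧ V ω = v} := by ext ω; simp
  have e2 : {ω | U ω = u ∧ (fun _ => (() : Unit)) ω = ()} = {ω | U ω = u} := by ext ω; simp
  have e3 : {ω | V ω = v ∧ (fun _ => (() : Unit)) ω = ()} = {ω | V ω = v} := by ext ω; simp
  have e4 : {ω : Ω | (fun _ : Ω => (() : Unit)) ω = ()} = Set.univ := by ext ω; simp
  rw [e1, e2, e3, e4, pr_univ', mul_one] at hh
  exact hh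

end AuxLemmas

/-- **Mutual-information subadditivity under sums** (Equation (12) of the paper).
Let `A` and `B` be random variables taking finitely many real values and `C` a
finite-valued random variable.  If `A ⟂ B` and `A ⟂ B ∣ C`, then
`I(A + B; C) ≤ I(A; C) + I(B; C)`. -/
theorem mi_subadditivity_under_sums
    {Ω : Type*} [MeasurableSpace Ω] (μ : Measure Ω) [IsProbabilityMeasure μ]
    {𝒞 : Type*} [Fintype 𝒞] [Nonempty 𝒞] [MeasurableSpace 𝒞] [MeasurableSingletonClass 𝒞]
    (A B : Ω → ℝ) (C : Ω → 𝒞)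
    (hA : Measurable A) (hB : Measurable B) (hC : Measurable C)
    (hAfin : (Set.range A).Finite) (hBfin : (Set.range B).Finite)
    (hAB : Indep μ A B) (hAB_C : CondIndep μ A B C) :
    mutualInfo μ (fun ω => A ω + B ω) C ≤ mutualInfo μ A C + mutualInfo μ B C := by
  classical
  set SA := hAfin.toFinset with hSAdef
  set SB := hBfin.toFinset with hSBdef
  have hmemA : ∀ ω, A ω ∈ SA := fun ω => hAfin.mem_toFinset.2 ⟨ω, rfl⟩
  have hmemB : ∀ ω, B ω ∈ SB := fun ω => hBfin.mem_toFinset.2 ⟨ω, rfl⟩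
  set SS : Finset ℝ := Finset.image (fun p : ℝ × ℝ => p.1 + p.2) (SA ×ˢ SB) with hSSdef
  have hmemS : ∀ ω, A ω + B ω ∈ SS := fun ω =>
    Finset.mem_image.2 ⟨(A ω, B ω), Finset.mem_product.2 ⟨hmemA ω, hmemB ω⟩, rfl⟩
  have hmemP : ∀ ω, (A ω, B ω) ∈ SA ×ˢ SB := fun ω =>
    Finset.mem_product.2 ⟨hmemA ω, hmemB ω⟩
  -- measurability
  have mA : ∀ a : ℝ, MeasurableSet {ω | A ω = a} := measurableSet_eq_of hA
  have mB : ∀ b : ℝ, MeasurableSet {ω | B ω = b} := measurableSet_eq_of hB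
  have mC : ∀ c : 𝒞, MeasurableSet {ω | C ω = c} := measurableSet_eq_of hC
  have mS : ∀ s : ℝ, MeasurableSet {ω | A ω + B ω = s} :=
    measurableSet_eq_of (hA.add hB)
  have mP : ∀ p : ℝ × ℝ, MeasurableSet {ω | (A ω, B ω) = p} :=
    measurableSet_eq_of (hA.prodMk hB)
  -- marginalization facts
  have M1 : ∀ (a : ℝ) (c : 𝒞), pr μ {ω | A ω = a ∧ C ω = c} =
      ∑ b ∈ SB, pr μ {ω | A ω = a ∧ B ω = b ∧ C ω = c} := by
    intro a c
    rw [pr_fiber_sum μ B SB hmemB {ω | A ω = a ∧ C ω = c}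
      (fun b => ((mA a).inter (mC c)).inter (mB b))]
    refine Finset.sum_congr rfl (fun b _ => ?_)
    congr 1
    ext ω
    simp only [Set.mem_inter_iff, Set.mem_setOf_eq]
    tauto
  have M2 : ∀ (b : ℝ) (c : 𝒞), pr μ {ω | B ω = b ∧ C ω = c} =
      ∑ a ∈ SA, pr μ {ω | A ω = a ∧ B ω = b ∧ C ω = c} := by
    intro b c
    rw [pr_fiber_sum μ A SA hmemA {ω | B ω = b ∧ C ω = c}
      (fun a => ((mB b).inter (mC c)).inter (mA a))]
    refine Finset.sum_congr rfl (fun a _ => ?_)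
    congr 1
    ext ω
    simp only [Set.mem_inter_iff, Set.mem_setOf_eq]
    tauto
  have M3 : ∀ (s : ℝ) (c : 𝒞), pr μ {ω | A ω + B ω = s ∧ C ω = c} =
      ∑ p ∈ (SA ×ˢ SB).filter (fun p : ℝ × ℝ => p.1 + p.2 = s),
        pr μ {ω | A ω = p.1 ∧ B ω = p.2 ∧ C ω = c} := by
    intro s c
    rw [pr_fiber_sum μ (fun ω => (A ω, B ω)) (SA ×ˢ SB) hmemP
      {ω | A ω + B ω = s ∧ C ω = c} (fun p => ((mS s).inter (mC c)).inter (mP p)),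
      Finset.sum_filter]
    refine Finset.sum_congr rfl ?_
    rintro ⟨p1, p2⟩ -
    by_cases hps : p1 + p2 = s
    · rw [if_pos hps]
      congr 1
      ext ω
      simp only [Set.mem_inter_iff, Set.mem_setOf_eq, Prod.mk.injEq]
      constructor
      · rintro ⟨⟨_, hc⟩, ha, hb⟩; exact ⟨ha, hb, hc⟩
      · rintro ⟨ha, hb, hc⟩; exact ⟨⟨by rw [ha, hb]; exact hps, hc⟩, ha, hb⟩
    · rw [if_neg hps]
      have hemp : {ω | A ω + B ω = s ∧ C ω = c} ∩ {ω | (A ω, B ω) = (p1, p2)} = ∅ := by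
        refine Set.eq_empty_iff_forall_notMem.2 (fun ω h => hps ?_)
        obtain ⟨⟨hs, -⟩, hp⟩ := h
        have h1 : A ω = p1 := congrArg Prod.fst hp
        have h2 : B ω = p2 := congrArg Prod.snd hp
        rw [← h1, ← h2]
        exact hs
      rw [hemp, pr_empty']
  have M4 : ∀ s : ℝ, pr μ {ω | A ω + B ω = s} =
      ∑ p ∈ (SA ×ˢ SB).filter (fun p : ℝ × ℝ => p.1 + p.2 = s),
        pr μ {ω | A ω = p.1 ∧ B ω = p.2} := by
    intro s
    rw [pr_fiber_sum μ (fun ω => (A ω, B ω)) (SA ×ˢ SB) hmemP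
      {ω | A ω + B ω = s} (fun p => (mS s).inter (mP p)), Finset.sum_filter]
    refine Finset.sum_congr rfl ?_
    rintro ⟨p1, p2⟩ -
    by_cases hps : p1 + p2 = s
    · rw [if_pos hps]
      congr 1
      ext ω
      simp only [Set.mem_inter_iff, Set.mem_setOf_eq, Prod.mk.injEq]
      constructor
      · rintro ⟨_, ha, hb⟩; exact ⟨ha, hb⟩
      · rintro ⟨ha, hb⟩; exact ⟨by rw [ha, hb]; exact hps, ha, hb⟩
    · rw [if_neg hps]
      have hemp : {ω | A ω + B ω = s} ∩ {ω | (A ω, B ω) = (p1, p2)} = ∅ := by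
        refine Set.eq_empty_iff_forall_notMem.2 (fun ω h => hps ?_)
        obtain ⟨hs, hp⟩ := h
        have h1 : A ω = p1 := congrArg Prod.fst hp
        have h2 : B ω = p2 := congrArg Prod.snd hp
        rw [← h1, ← h2]
        exact hs
      rw [hemp, pr_empty']
  -- monotonicity facts
  have sub_ab : ∀ (a b : ℝ) (c : 𝒞),
      pr μ {ω | A ω = a ∧ B ω = b ∧ C ω = c} ≤ pr μ {ω | A ω = a ∧ B ω = b} :=
    fun a b c => pr_mono' μ (fun ω h => ⟨h.1, h.2.1⟩)
  have sub_ac : ∀ (a b : ℝ) (c : 𝒞),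
      pr μ {ω | A ω = a ∧ B ω = b ∧ C ω = c} ≤ pr μ {ω | A ω = a ∧ C ω = c} :=
    fun a b c => pr_mono' μ (fun ω h => ⟨h.1, h.2.2⟩)
  have sub_bc : ∀ (a b : ℝ) (c : 𝒞),
      pr μ {ω | A ω = a ∧ B ω = b ∧ C ω = c} ≤ pr μ {ω | B ω = b ∧ C ω = c} :=
    fun a b c => pr_mono' μ (fun ω h => ⟨h.2.1, h.2.2⟩)
  have sub_c : ∀ (a b : ℝ) (c : 𝒞),
      pr μ {ω | A ω = a ∧ B ω = b ∧ C ω = c} ≤ pr μ {ω | C ω = c} :=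
    fun a b c => pr_mono' μ (fun ω h => h.2.2)
  have sub_a : ∀ (a : ℝ) (c : 𝒞),
      pr μ {ω | A ω = a ∧ C ω = c} ≤ pr μ {ω | A ω = a} :=
    fun a c => pr_mono' μ (fun ω h => h.1)
  have sub_b : ∀ (b : ℝ) (c : 𝒞),
      pr μ {ω | B ω = b ∧ C ω = c} ≤ pr μ {ω | B ω = b} :=
    fun b c => pr_mono' μ (fun ω h => h.1)
  -- step B : the chain rule with independence
  have hterm : ∀ (a b : ℝ) (c : 𝒞),
      pr μ {ω | A ω = a ∧ B ω = b ∧ C ω = c} *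
        Real.log (pr μ {ω | A ω = a ∧ B ω = b ∧ C ω = c} /
          (pr μ {ω | A ω = a ∧ B ω = b} * pr μ {ω | C ω = c})) =
      pr μ {ω | A ω = a ∧ B ω = b ∧ C ω = c} *
        Real.log (pr μ {ω | A ω = a ∧ C ω = c} /
          (pr μ {ω | A ω = a} * pr μ {ω | C ω = c})) +
      pr μ {ω | A ω = a ∧ B ω = b ∧ C ω = c} *
        Real.log (pr μ {ω | B ω = b ∧ C ω = c} /
          (pr μ {ω | B ω = b} * pr μ {ω | C ω = c})) := by
    intro a b c
    by_cases h0 : pr μ {ω | A ω = a ∧ B ω = b ∧ C ω = c} = 0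
    · rw [h0]; ring
    · have hp3 : 0 < pr μ {ω | A ω = a ∧ B ω = b ∧ C ω = c} :=
        lt_of_le_of_ne (pr_nonneg' μ _) (Ne.symm h0)
      have hpac : 0 < pr μ {ω | A ω = a ∧ C ω = c} := lt_of_lt_of_le hp3 (sub_ac a b c)
      have hpbc : 0 < pr μ {ω | B ω = b ∧ C ω = c} := lt_of_lt_of_le hp3 (sub_bc a b c)
      have hpc : 0 < pr μ {ω | C ω = c} := lt_of_lt_of_le hp3 (sub_c a b c)
      have hpa : 0 < pr μ {ω | A ω = a} := lt_of_lt_of_le hpac (sub_a a c)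
      have hpb : 0 < pr μ {ω | B ω = b} := lt_of_lt_of_le hpbc (sub_b b c)
      have hind := indep_pr μ hAB a b
      have hcc := hAB_C a b c
      have harg : pr μ {ω | A ω = a ∧ B ω = b ∧ C ω = c} /
          (pr μ {ω | A ω = a ∧ B ω = b} * pr μ {ω | C ω = c}) =
          (pr μ {ω | A ω = a ∧ C ω = c} /
            (pr μ {ω | A ω = a} * pr μ {ω | C ω = c})) *
          (pr μ {ω | B ω = b ∧ C ω = c} /
            (pr μ {ω | B ω = b} * pr μ {ω | C ω = c})) := by
        rw [hind]
        field_simp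
        linear_combination hcc
      rw [harg, Real.log_mul (div_pos hpac (mul_pos hpa hpc)).ne'
        (div_pos hpbc (mul_pos hpb hpc)).ne']
      ring
  have key2 : ∑ p ∈ SA ×ˢ SB, ∑ c : 𝒞,
      pr μ {ω | A ω = p.1 ∧ B ω = p.2 ∧ C ω = c} *
        Real.log (pr μ {ω | A ω = p.1 ∧ B ω = p.2 ∧ C ω = c} /
          (pr μ {ω | A ω = p.1 ∧ B ω = p.2} * pr μ {ω | C ω = c})) =
      (∑ a ∈ SA, ∑ c : 𝒞, pr μ {ω | A ω = a ∧ C ω = c} *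
        Real.log (pr μ {ω | A ω = a ∧ C ω = c} /
          (pr μ {ω | A ω = a} * pr μ {ω | C ω = c}))) +
      (∑ b ∈ SB, ∑ c : 𝒞, pr μ {ω | B ω = b ∧ C ω = c} *
        Real.log (pr μ {ω | B ω = b ∧ C ω = c} /
          (pr μ {ω | B ω = b} * pr μ {ω | C ω = c}))) := by
    calc ∑ p ∈ SA ×ˢ SB, ∑ c : 𝒞,
        pr μ {ω | A ω = p.1 ∧ B ω = p.2 ∧ C ω = c} *
          Real.log (pr μ {ω | A ω = p.1 ∧ B ω = p.2 ∧ C ω = c} /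
            (pr μ {ω | A ω = p.1 ∧ B ω = p.2} * pr μ {ω | C ω = c})) =
        ∑ p ∈ SA ×ˢ SB, ∑ c : 𝒞,
          (pr μ {ω | A ω = p.1 ∧ B ω = p.2 ∧ C ω = c} *
            Real.log (pr μ {ω | A ω = p.1 ∧ C ω = c} /
              (pr μ {ω | A ω = p.1} * pr μ {ω | C ω = c})) +
          pr μ {ω | A ω = p.1 ∧ B ω = p.2 ∧ C ω = c} *
            Real.log (pr μ {ω | B ω = p.2 ∧ C ω = c} /
              (pr μ {ω | B ω = p.2} * pr μ {ω | C ω = c}))) :=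
          Finset.sum_congr rfl (fun p _ =>
            Finset.sum_congr rfl (fun c _ => hterm p.1 p.2 c))
      _ = (∑ p ∈ SA ×ˢ SB, ∑ c : 𝒞,
            pr μ {ω | A ω = p.1 ∧ B ω = p.2 ∧ C ω = c} *
              Real.log (pr μ {ω | A ω = p.1 ∧ C ω = c} /
                (pr μ {ω | A ω = p.1} * pr μ {ω | C ω = c}))) +
          (∑ p ∈ SA ×ˢ SB, ∑ c : 𝒞,
            pr μ {ω | A ω = p.1 ∧ B ω = p.2 ∧ C ω = c} *
              Real.log (pr μ {ω | B ω = p.2 ∧ C ω = c} /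
                (pr μ {ω | B ω = p.2} * pr μ {ω | C ω = c}))) := by
          rw [← Finset.sum_add_distrib]
          exact Finset.sum_congr rfl (fun p _ => Finset.sum_add_distrib)
      _ = _ := by
          congr 1
          · rw [Finset.sum_product]
            dsimp only
            refine Finset.sum_congr rfl (fun a _ => ?_)
            rw [Finset.sum_comm]
            refine Finset.sum_congr rfl (fun c _ => ?_)
            rw [← Finset.sum_mul, ← M1 a c]
          · rw [Finset.sum_product]
            dsimp only
            rw [Finset.sum_comm]
            refine Finset.sum_congr rfl (fun b _ => ?_)
            rw [Finset.sum_comm]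
            refine Finset.sum_congr rfl (fun c _ => ?_)
            rw [← Finset.sum_mul, ← M2 b c]
  -- step C : data processing via the log-sum inequality
  have key1 : ∑ s ∈ SS, ∑ c : 𝒞,
      pr μ {ω | A ω + B ω = s ∧ C ω = c} *
        Real.log (pr μ {ω | A ω + B ω = s ∧ C ω = c} /
          (pr μ {ω | A ω + B ω = s} * pr μ {ω | C ω = c})) ≤
      ∑ p ∈ SA ×ˢ SB, ∑ c : 𝒞,
        pr μ {ω | A ω = p.1 ∧ B ω = p.2 ∧ C ω = c} *
          Real.log (pr μ {ω | A ω = p.1 ∧ B ω = p.2 ∧ C ω = c} /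
            (pr μ {ω | A ω = p.1 ∧ B ω = p.2} * pr μ {ω | C ω = c})) := by
    rw [Finset.sum_comm (s := SS), Finset.sum_comm (s := SA ×ˢ SB)]
    refine Finset.sum_le_sum (fun c _ => ?_)
    rw [← Finset.sum_fiberwise_of_maps_to (g := fun p : ℝ × ℝ => p.1 + p.2)
      (t := SS) (fun p hp => Finset.mem_image.2 ⟨p, hp, rfl⟩)]
    refine Finset.sum_le_sum (fun s _ => ?_)
    have hls := log_sum_ineq ((SA ×ˢ SB).filter (fun p : ℝ × ℝ => p.1 + p.2 = s))
      (fun p : ℝ × ℝ => pr μ {ω | A ω = p.1 ∧ B ω = p.2 ∧ C ω = c})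
      (fun p : ℝ × ℝ => pr μ {ω | A ω = p.1 ∧ B ω = p.2} * pr μ {ω | C ω = c})
      (fun p _ => pr_nonneg' μ _)
      (fun p _ => mul_nonneg (pr_nonneg' μ _) (pr_nonneg' μ _))
      (fun (p : ℝ × ℝ) _ h => by
        rcases mul_eq_zero.1 h with h | h
        · exact le_antisymm (h ▸ sub_ab p.1 p.2 c) (pr_nonneg' μ _)
        · exact le_antisymm (h ▸ sub_c p.1 p.2 c) (pr_nonneg' μ _))
    rw [← Finset.sum_mul] at hls
    rw [M3 s c, M4 s]
    exact hls
  rw [mutualInfo_eq_sum μ A C SA hmemA, mutualInfo_eq_sum μ B C SB hmemB,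
    mutualInfo_eq_sum μ (fun ω => A ω + B ω) C SS hmemS]
  exact key1.trans key2.le
end

section
/- (Insufficiency of Criteria 2.2 and 2.3 for Criterion 2.1, Appendix B) For every n ≥ 1 there exist a probability space (Ω, F, μ), nonempty finite types 𝒳, 𝒴, ℰ, and random variables X : Ω → 𝒳, Y : Ω → 𝒴, E : Ω → ℰ, and X₁, …, Xₙ : Ω → 𝒳 with context set S := (X₁, …, Xₙ) : Ω → 𝒳ⁿ, such that: (i) X, X₁, …, Xₙ are conditionally i.i.d. given E, i.e. P(X=x, X₁=x₁, …, Xₙ=xₙ, E=e) · P(E=e)ⁿ = P(X=x, E=e) · ∏_{i=1}^n P(X=x_i, E=e) for all e, x, x₁, …, xₙ; (ii) Y ⊥ S | (X, E); (iii) E and S are NOT conditionally independent given X (Criterion 2.2 holds); (iv) Y and E are NOT conditionally independent given X (Criterion 2.3 holds); and yet (v) Y ⊥ S | X (Criterion 2.1 fails). -/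
open MeasureTheory

open MarginalTransfer

open scoped Classical

namespace MTaux

noncomputable def p (b x : Bool) : ℝ := if x = b then 3/4 else 1/4

lemma p_nonneg (b x : Bool) : 0 ≤ p b x := by unfold p; split <;> norm_num
lemma p_sum (b : Bool) : p b true + p b false = 1 := by cases b <;> simp [p] <;> norm_num

lemma sum_xs_prod (n : ℕ) (b : Bool) : ∑ xs : Fin n → Bool, ∏ i, p b (xs i) = 1 := by
  rw [← Fintype.piFinset_univ, ← Finset.prod_univ_sum]
  have h : ∀ i : Fin n, ∑ x : Bool, p b x = 1 := by
    intro i; rw [Fintype.sum_bool]; exact p_sum b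
  calc ∏ i : Fin n, ∑ x : Bool, p b x = ∏ _i : Fin n, (1:ℝ) :=
        Finset.prod_congr rfl fun i _ => h i
    _ = 1 := Finset.prod_const_one

abbrev Ωn (n : ℕ) := (Bool × Bool) × Bool × (Fin n → Bool)

noncomputable def g (n : ℕ) (ω : Ωn n) : ℝ :=
  (1/4) * p ω.1.1 ω.2.1 * ∏ i, p ω.1.1 (ω.2.2 i)

lemma g_nonneg (n : ℕ) (ω : Ωn n) : 0 ≤ g n ω := by
  unfold g
  have h1 := p_nonneg ω.1.1 ω.2.1
  have h2 : 0 ≤ ∏ i, p ω.1.1 (ω.2.2 i) := Finset.prod_nonneg fun i _ => p_nonneg _ _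
  positivity

instance (n : ℕ) : MeasurableSpace (Ωn n) := ⊤

noncomputable def μn (n : ℕ) : Measure (Ωn n) :=
  ∑ ω : Ωn n, ENNReal.ofReal (g n ω) • Measure.dirac ω

lemma pr_eq (n : ℕ) (A : Set (Ωn n)) :
    MarginalTransfer.pr (μn n) A = ∑ ω : Ωn n, if ω ∈ A then g n ω else 0 := by
  unfold MarginalTransfer.pr μn
  rw [show ((∑ ω : Ωn n, ENNReal.ofReal (g n ω) • Measure.dirac ω) A)
      = ∑ ω : Ωn n, (ENNReal.ofReal (g n ω) • Measure.dirac ω) A by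
    rw [Measure.coe_finset_sum]; simp]
  simp only [Measure.smul_apply, smul_eq_mul,
    Measure.dirac_apply' _ (MeasurableSpace.measurableSet_top)]
  rw [ENNReal.toReal_sum (by intro a _; exact ENNReal.mul_ne_top ENNReal.ofReal_ne_top (by
    simp [Set.indicator_apply]; split <;> simp))]
  congr 1; ext ω
  rw [ENNReal.toReal_mul, ENNReal.toReal_ofReal (g_nonneg n ω)]
  simp [Set.indicator_apply]
  split <;> simp

lemma sum_g (n : ℕ) : ∑ ω : Ωn n, g n ω = 1 := by
  simp only [Fintype.sum_prod_type, g]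
  simp [Fintype.sum_bool, ← add_mul, ← Finset.mul_sum, sum_xs_prod]
  have h1 := p_sum true; have h2 := p_sum false
  nlinarith [h1, h2]

instance (n : ℕ) : IsProbabilityMeasure (μn n) := by
  constructor
  unfold μn
  rw [show ((∑ ω : Ωn n, ENNReal.ofReal (g n ω) • Measure.dirac ω) Set.univ)
      = ∑ ω : Ωn n, (ENNReal.ofReal (g n ω) • Measure.dirac ω) Set.univ by
    rw [Measure.coe_finset_sum]; simp]
  simp only [Measure.smul_apply, measure_univ, smul_eq_mul, mul_one]
  rw [← ENNReal.ofReal_sum_of_nonneg (fun ω _ => g_nonneg n ω), sum_g]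
  simp

end MTaux
open MTaux


/-- **Insufficiency of Criteria 2.2 and 2.3 for Criterion 2.1** (Appendix B).
For every `n ≥ 1` there exist a probability space, nonempty finite value types,
and random variables `X, Y, E, X₁, …, Xₙ` with context set `S := (X₁, …, Xₙ)`
such that (i) `X, X₁, …, Xₙ` are conditionally i.i.d. given `E`,
(ii) `Y ⟂ S ∣ (X, E)`, (iii) `E` and `S` are NOT conditionally independent
given `X` (Criterion 2.2 holds), (iv) `Y` and `E` are NOT conditionally
independent given `X` (Criterion 2.3 holds), and yet (v) `Y ⟂ S ∣ X`
(Criterion 2.1 fails). -/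
theorem insufficiency_of_criteria (n : ℕ) (hn : 1 ≤ n) :
    ∃ (Ω : Type) (_ : MeasurableSpace Ω) (μ : Measure Ω) (_ : IsProbabilityMeasure μ)
      (𝒳 𝒴 ℰ : Type)
      (_ : Fintype 𝒳) (_ : Nonempty 𝒳) (_ : MeasurableSpace 𝒳)
      (_ : MeasurableSingletonClass 𝒳)
      (_ : Fintype 𝒴) (_ : Nonempty 𝒴) (_ : MeasurableSpace 𝒴)
      (_ : MeasurableSingletonClass 𝒴)
      (_ : Fintype ℰ) (_ : Nonempty ℰ) (_ : MeasurableSpace ℰ)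
      (_ : MeasurableSingletonClass ℰ)
      (X : Ω → 𝒳) (Y : Ω → 𝒴) (E : Ω → ℰ) (Xi : Fin n → Ω → 𝒳),
      Measurable X ∧ Measurable Y ∧ Measurable E ∧ (∀ i, Measurable (Xi i)) ∧
      -- (i) X, X₁, …, Xₙ are conditionally i.i.d. given E
      (∀ (e : ℰ) (x : 𝒳) (xs : Fin n → 𝒳),
        pr μ {ω | X ω = x ∧ (∀ i, Xi i ω = xs i) ∧ E ω = e} *
            (pr μ {ω | E ω = e}) ^ n =
          pr μ {ω | X ω = x ∧ E ω = e} *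
            ∏ i, pr μ {ω | X ω = xs i ∧ E ω = e}) ∧
      -- (ii) Y ⟂ S ∣ (X, E), where S := (X₁, …, Xₙ)
      CondIndep μ Y (fun ω i => Xi i ω) (fun ω => (X ω, E ω)) ∧
      -- (iii) Criterion 2.2 holds: ¬(E ⟂ S ∣ X)
      ¬ CondIndep μ E (fun ω i => Xi i ω) X ∧
      -- (iv) Criterion 2.3 holds: ¬(Y ⟂ E ∣ X)
      ¬ CondIndep μ Y E X ∧
      -- (v) Criterion 2.1 fails: Y ⟂ S ∣ X
      CondIndep μ Y (fun ω i => Xi i ω) X := by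
  refine ⟨Ωn n, inferInstance, μn n, inferInstance, Bool, Bool, Bool × Bool,
    inferInstance, inferInstance, inferInstance, inferInstance,
    inferInstance, inferInstance, inferInstance, inferInstance,
    inferInstance, inferInstance, inferInstance, inferInstance,
    fun ω => ω.2.1, fun ω => ω.1.2, fun ω => ω.1, fun i ω => ω.2.2 i,
    fun _ _ => MeasurableSpace.measurableSet_top,
    fun _ _ => MeasurableSpace.measurableSet_top,
    fun _ _ => MeasurableSpace.measurableSet_top,
    fun _ _ _ => MeasurableSpace.measurableSet_top,
    ?_, ?_, ?_, ?_, ?_⟩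
  · -- (i)
    intro e x xs
    simp only [pr_eq, Fintype.sum_prod_type, Set.mem_setOf_eq, g, Prod.ext_iff,
      ← funext_iff]
    simp [ite_and, Finset.sum_ite_eq, Finset.sum_ite_eq', Fintype.sum_bool,
      ← Finset.mul_sum, sum_xs_prod]
    rw [Finset.prod_mul_distrib, Finset.prod_const]
    have hps := p_sum e.1
    rw [hps]
    simp only [Finset.card_univ, Fintype.card_fin]
    ring
  · -- (ii)
    rintro y s ⟨x, e1, e2⟩
    simp only [pr_eq, Fintype.sum_prod_type, Set.mem_setOf_eq, g, Prod.ext_iff,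
      Prod.mk.injEq]
    simp [ite_and, Finset.sum_ite_eq, Finset.sum_ite_eq', Fintype.sum_bool,
      ← Finset.mul_sum, sum_xs_prod]
    split_ifs <;> ring
  · -- (iii)
    intro h
    have h3 := h (true, true) (fun _ => true) true
    simp only [pr_eq, Fintype.sum_prod_type, Set.mem_setOf_eq, g, Prod.ext_iff,
      Prod.mk.injEq] at h3
    simp [ite_and, Finset.sum_ite_eq, Finset.sum_ite_eq', Fintype.sum_bool,
      ← Finset.mul_sum, sum_xs_prod, Finset.prod_const] at h3
    simp [p] at h3
    have hlt : ((1:ℝ)/4) ^ n < ((3:ℝ)/4) ^ n :=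
      pow_lt_pow_left₀ (by norm_num) (by norm_num) (by omega)
    rw [show ((4:ℝ)^n)⁻¹ = ((1:ℝ)/4)^n by rw [one_div, inv_pow]] at h3
    nlinarith [hlt, h3]
  · -- (iv)
    intro h
    have h4 := h true (true, true) true
    simp only [pr_eq, Fintype.sum_prod_type, Set.mem_setOf_eq, g, Prod.ext_iff,
      Prod.mk.injEq] at h4
    simp [ite_and, Finset.sum_ite_eq, Finset.sum_ite_eq', Fintype.sum_bool,
      ← Finset.mul_sum, sum_xs_prod, Finset.prod_const] at h4
    simp [p] at h4
    norm_num at h4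
  · -- (v)
    intro y s x
    simp only [pr_eq, Fintype.sum_prod_type, Set.mem_setOf_eq, g, Prod.ext_iff]
    simp [ite_and, Finset.sum_ite_eq, Finset.sum_ite_eq', Fintype.sum_bool,
      ← Finset.mul_sum, sum_xs_prod]
    ring
end
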